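/- arXiv:2407.17280 — 6 statements merged into one kernel-verified Lean document; each statement's English description precedes it below -/
import Mathlib

section
/- Let g ∈ H with ‖g‖_H ≤ 1, and let ζ > 0. Then there exists a function g_ζ : ℝ → ℝ that is (1/ζ)-Lipschitz, satisfies g_ζ(0) = 0, and satisfies ‖g − g_ζ‖_∞ ≤ ζ, i.e., |g(a) − g_ζ(a)| ≤ ζ for all a ∈ ℝ. -/
open MeasureTheory ProbabilityTheory Real

noncomputable section

/-- `h` is a square-integrable weak-derivative representation of `g` (so `g 0 = 0`). -/
def IsHRep (g h : ℝ → ℝ) : Prop :=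
  Measurable h ∧ MeasureTheory.Integrable (fun t => h t ^ 2) ∧
    ∀ x : ℝ, g x = ∫ t in (0 : ℝ)..x, h t

/-- Membership in the Sobolev space `H`. -/
def MemH (g : ℝ → ℝ) : Prop := ∃ h, IsHRep g h

/-- The Sobolev norm `‖g‖_H = (∫ (g')²)^{1/2}`. -/
def HNorm (g : ℝ → ℝ) : ℝ :=
  sInf {r : ℝ | ∃ h, IsHRep g h ∧ r = Real.sqrt (∫ t : ℝ, h t ^ 2)}

/-- The unit ball of `H`. -/
def HUnitBall : Set (ℝ → ℝ) := {g | MemH g ∧ HNorm g ≤ 1}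

/-- The dot product on `ℝ^d`. -/
def dotp {d : ℕ} (w x : Fin d → ℝ) : ℝ := ∑ a, w a * x a

/-- `N` is a norm on `ℝ^d`. -/
def IsNorm {d : ℕ} (N : (Fin d → ℝ) → ℝ) : Prop :=
  (∀ x, 0 ≤ N x) ∧ (∀ x, N x = 0 ↔ x = 0) ∧ (∀ (t : ℝ) (x), N (t • x) = |t| * N x) ∧
    ∀ x y, N (x + y) ≤ N x + N y

/-- The dual norm `‖x‖_* = sup_{N w ≤ 1} wᵀx`. -/
def dualNorm {d : ℕ} (N : (Fin d → ℝ) → ℝ) (x : Fin d → ℝ) : ℝ :=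
  sSup {s : ℝ | ∃ w, N w ≤ 1 ∧ s = dotp w x}

/-- Standard Gaussian measure on `ℝ^n`. -/
def stdGaussianPi (n : ℕ) : Measure (Fin n → ℝ) :=
  MeasureTheory.Measure.pi fun _ => gaussianReal 0 1

/-- The Gaussian complexity `G_n` of the class
`{x ↦ g(wᵀx) : N w = 1, ‖g‖_H ≤ 1}` under covariate law `μX`. -/
def gaussComplexity (d n : ℕ) (N : (Fin d → ℝ) → ℝ) (μX : Measure (Fin d → ℝ)) : ℝ :=
  ∫ x : Fin n → Fin d → ℝ,
    (∫ ε : Fin n → ℝ,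
      sSup {s : ℝ | ∃ w, N w = 1 ∧ ∃ g ∈ HUnitBall,
        s = (n : ℝ)⁻¹ * ∑ i, ε i * g (dotp w (x i))} ∂(stdGaussianPi n))
    ∂(MeasureTheory.Measure.pi fun _ : Fin n => μX)

/-- `(c, μ, g)` is a valid representation of `f ∈ F_∞`:
`f x = c + ∫ g_w(wᵀx) dμ(w)` with `μ` a probability measure on the `N`-unit sphere,
each `g_w ∈ H`, and all relevant integrals existing. -/
def IsFRep {d : ℕ} (N : (Fin d → ℝ) → ℝ) (f : (Fin d → ℝ) → ℝ) (c : ℝ)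
    (μ : Measure (Fin d → ℝ)) (g : (Fin d → ℝ) → ℝ → ℝ) : Prop :=
  IsProbabilityMeasure μ ∧ (∀ᵐ w ∂μ, N w = 1) ∧ (∀ w, MemH (g w)) ∧
    (∀ x, MeasureTheory.Integrable (fun w => g w (dotp w x)) μ) ∧
    MeasureTheory.Integrable (fun w => HNorm (g w)) μ ∧
    ∀ x, f x = c + ∫ w, g w (dotp w x) ∂μ

/-- Membership in `F_∞`. -/
def MemFInfty {d : ℕ} (N : (Fin d → ℝ) → ℝ) (f : (Fin d → ℝ) → ℝ) : Prop :=
  ∃ c μ g, IsFRep N f c μ g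

/-- `Ω₀(f)`: infimum of `∫ ‖g_w‖_H dμ(w)` over representations of `f`. -/
def Omega0 {d : ℕ} (N : (Fin d → ℝ) → ℝ) (f : (Fin d → ℝ) → ℝ) : ℝ :=
  sInf {r : ℝ | ∃ c μ g, IsFRep N f c μ g ∧ r = ∫ w, HNorm (g w) ∂μ}

/-- `Ω(f) = max(|f(0)|, Ω₀(f))`. -/
def OmegaP {d : ℕ} (N : (Fin d → ℝ) → ℝ) (f : (Fin d → ℝ) → ℝ) : ℝ :=
  max |f 0| (Omega0 N f)

/-- Expected risk. -/
def trueRisk {d : ℕ} (ℓ : ℝ → ℝ → ℝ) (μXY : Measure ((Fin d → ℝ) × ℝ))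
    (f : (Fin d → ℝ) → ℝ) : ℝ := ∫ p, ℓ p.2 (f p.1) ∂μXY

/-- Empirical risk on a sample `ω`. -/
def empRisk {d n : ℕ} (ℓ : ℝ → ℝ → ℝ) (ω : Fin n → (Fin d → ℝ) × ℝ)
    (f : (Fin d → ℝ) → ℝ) : ℝ := (n : ℝ)⁻¹ * ∑ i, ℓ (ω i).2 (f (ω i).1)

/-- `Z` is subgaussian with variance proxy `v` under `μ`. -/
def IsSubG {Ω : Type*} [MeasurableSpace Ω] (μ : Measure Ω) (Z : Ω → ℝ) (v : ℝ) : Prop :=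
  ∀ t : ℝ, 0 < t →
    max (μ {ω | t ≤ Z ω}).toReal (μ {ω | Z ω ≤ -t}).toReal ≤ Real.exp (-t ^ 2 / (2 * v))

/-- The Brownian kernel. -/
def brownianK (a b : ℝ) : ℝ := (|a| + |b| - |a - b|) / 2

/-- Brownian kernel matrix of projected data. -/
def KMat {d n : ℕ} (x : Fin n → Fin d → ℝ) (w : Fin d → ℝ) : Matrix (Fin n) (Fin n) ℝ :=
  Matrix.of fun i i' => brownianK (dotp w (x i)) (dotp w (x i'))


/-- An L² function is integrable on finite-measure sets. -/
lemma integrableOn_of_sq_aux {h : ℝ → ℝ} (hm : Measurable h)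
    (hi : MeasureTheory.Integrable (fun t => h t ^ 2)) {s : Set ℝ} (hfin : volume s < ⊤) :
    MeasureTheory.IntegrableOn h s := by
  have h2 : MeasureTheory.MemLp h 2 (volume : Measure ℝ) :=
    (MeasureTheory.memLp_two_iff_integrable_sq hm.aestronglyMeasurable).mpr hi
  haveI : IsFiniteMeasure ((volume : Measure ℝ).restrict s) :=
    ⟨by rwa [Measure.restrict_apply_univ]⟩
  exact (h2.restrict s).integrable one_le_two

lemma intervalIntegrable_of_sq_aux {h : ℝ → ℝ} (hm : Measurable h)
    (hi : MeasureTheory.Integrable (fun t => h t ^ 2)) (a b : ℝ) :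
    IntervalIntegrable h volume a b := by
  rw [intervalIntegrable_iff]
  exact integrableOn_of_sq_aux hm hi measure_Ioc_lt_top

lemma lint_ofReal_max {f : ℝ → ℝ} {s : Set ℝ}
    (hf : MeasureTheory.IntegrableOn f s volume) :
    ∫⁻ t in s, ENNReal.ofReal (f t) = ENNReal.ofReal (∫ t in s, max (f t) 0) := by
  rw [MeasureTheory.ofReal_integral_eq_lintegral_ofReal hf.pos_part
    (MeasureTheory.ae_of_all _ fun t => le_max_right _ _)]
  refine MeasureTheory.lintegral_congr fun t => ?_
  rcases le_total (f t) 0 with h | h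
  · rw [max_eq_right h, ENNReal.ofReal_eq_zero.mpr h, ENNReal.ofReal_zero]
  · rw [max_eq_left h]

/-- The weak derivative of `g` is a.e. unique. -/
lemma hrep_ae_eq {g h₁ h₂ : ℝ → ℝ} (H₁ : IsHRep g h₁) (H₂ : IsHRep g h₂) :
    h₁ =ᵐ[(volume : Measure ℝ)] h₂ := by
  obtain ⟨m₁, i₁, e₁⟩ := H₁
  obtain ⟨m₂, i₂, e₂⟩ := H₂
  have hint : ∀ a b : ℝ, a < b →
      ∫ t in Set.Ioc a b, (h₁ t - h₂ t) = 0 := by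
    intro a b hab
    have I1 : IntervalIntegrable h₁ volume a b := intervalIntegrable_of_sq_aux m₁ i₁ a b
    have I2 : IntervalIntegrable h₂ volume a b := intervalIntegrable_of_sq_aux m₂ i₂ a b
    have key : (∫ t in a..b, h₁ t) = ∫ t in a..b, h₂ t := by
      have e1 : (∫ t in a..b, h₁ t) = g b - g a := by
        rw [e₁ b, e₁ a]
        exact (intervalIntegral.integral_interval_sub_left
          (intervalIntegrable_of_sq_aux m₁ i₁ 0 b)
          (intervalIntegrable_of_sq_aux m₁ i₁ 0 a)).symm
      have e2 : (∫ t in a..b, h₂ t) = g b - g a := by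
        rw [e₂ b, e₂ a]
        exact (intervalIntegral.integral_interval_sub_left
          (intervalIntegrable_of_sq_aux m₂ i₂ 0 b)
          (intervalIntegrable_of_sq_aux m₂ i₂ 0 a)).symm
      rw [e1, e2]
    rw [intervalIntegral.integral_of_le hab.le, intervalIntegral.integral_of_le hab.le] at key
    have : MeasureTheory.IntegrableOn h₂ (Set.Ioc a b) :=
      integrableOn_of_sq_aux m₂ i₂ measure_Ioc_lt_top
    rw [MeasureTheory.integral_sub (integrableOn_of_sq_aux m₁ i₁ measure_Ioc_lt_top) this, key,
      sub_self]
  set d : ℝ → ℝ := fun t => h₁ t - h₂ t with hd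
  have md : Measurable d := m₁.sub m₂
  have hident : ∀ a b : ℝ, a < b → MeasureTheory.IntegrableOn d (Set.Ioc a b) := fun a b _ =>
    (integrableOn_of_sq_aux m₁ i₁ measure_Ioc_lt_top).sub
      (integrableOn_of_sq_aux m₂ i₂ measure_Ioc_lt_top)
  have e1 : ∀ a b : ℝ, a < b → ∫⁻ t in Set.Ioc a b, ENNReal.ofReal (d t) =
      ENNReal.ofReal (∫ t in Set.Ioc a b, max (d t) 0) := fun a b hab =>
    lint_ofReal_max (hident a b hab)
  have e2 : ∀ a b : ℝ, a < b → ∫⁻ t in Set.Ioc a b, ENNReal.ofReal (-(d t)) =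
      ENNReal.ofReal (∫ t in Set.Ioc a b, max (-(d t)) 0) := by
    intro a b hab
    have hnd : MeasureTheory.IntegrableOn (fun t => -(d t)) (Set.Ioc a b) volume :=
      (hident a b hab).neg
    exact lint_ofReal_max hnd
  have hwd : (volume : Measure ℝ).withDensity (fun t => ENNReal.ofReal (d t)) =
      (volume : Measure ℝ).withDensity (fun t => ENNReal.ofReal (-(d t))) := by
    apply MeasureTheory.Measure.ext_of_Ioc'
    · intro a b hab
      rw [MeasureTheory.withDensity_apply _ measurableSet_Ioc, e1 a b hab]
      exact ENNReal.ofReal_ne_top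
    · intro a b hab
      rw [MeasureTheory.withDensity_apply _ measurableSet_Ioc,
        MeasureTheory.withDensity_apply _ measurableSet_Ioc, e1 a b hab, e2 a b hab]
      congr 1
      have hnd : MeasureTheory.IntegrableOn (fun t => -(d t)) (Set.Ioc a b) volume :=
        (hident a b hab).neg
      have hi1 : MeasureTheory.IntegrableOn (fun t => max (d t) 0) (Set.Ioc a b) volume :=
        (hident a b hab).pos_part
      have hi2 : MeasureTheory.IntegrableOn (fun t => max (-(d t)) 0) (Set.Ioc a b) volume :=
        hnd.pos_part
      have heq : (∫ t in Set.Ioc a b, (max (d t) 0 - max (-(d t)) 0)) =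
          ∫ t in Set.Ioc a b, d t := by
        apply MeasureTheory.integral_congr_ae (MeasureTheory.ae_of_all _ fun t => ?_)
        rcases le_total (d t) 0 with h | h
        · rw [max_eq_right h, max_eq_left (by linarith : (0:ℝ) ≤ -(d t))]; ring
        · rw [max_eq_left h, max_eq_right (by linarith : -(d t) ≤ 0)]; ring
      have hsub : (∫ t in Set.Ioc a b, max (d t) 0) - ∫ t in Set.Ioc a b, max (-(d t)) 0 = 0 := by
        rw [← MeasureTheory.integral_sub hi1 hi2, heq, hint a b hab]
      linarith
  have := (MeasureTheory.withDensity_eq_iff_of_sigmaFinite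
    (md.ennreal_ofReal.aemeasurable) (md.neg.ennreal_ofReal.aemeasurable)).mp hwd
  filter_upwards [this] with t ht
  have h1 : d t ≤ 0 := by
    by_contra hc
    push_neg at hc
    rw [Pi.neg_apply, ENNReal.ofReal_eq_zero.mpr (by linarith : -(d t) ≤ 0)] at ht
    exact absurd ht (ENNReal.ofReal_pos.mpr hc).ne'
  have h2 : -(d t) ≤ 0 := by
    by_contra hc
    push_neg at hc
    rw [ENNReal.ofReal_eq_zero.mpr (by linarith : d t ≤ 0)] at ht
    exact absurd ht.symm (ENNReal.ofReal_pos.mpr hc).ne'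
  have : d t = 0 := le_antisymm h1 (by linarith)
  simpa [hd, sub_eq_zero] using this

/-- The `H` norm is computed by any representation. -/
lemma hnorm_eq_of_rep {g h : ℝ → ℝ} (H : IsHRep g h) :
    HNorm g = Real.sqrt (∫ t : ℝ, h t ^ 2) := by
  have : {r : ℝ | ∃ h', IsHRep g h' ∧ r = Real.sqrt (∫ t : ℝ, h' t ^ 2)} =
      {Real.sqrt (∫ t : ℝ, h t ^ 2)} := by
    ext r
    constructor
    · rintro ⟨h', H', rfl⟩
      have : (∫ t : ℝ, h' t ^ 2) = ∫ t : ℝ, h t ^ 2 :=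
        MeasureTheory.integral_congr_ae <| by
          filter_upwards [hrep_ae_eq H' H] with t ht using by rw [ht]
      simp [this]
    · rintro rfl
      exact ⟨h, H, rfl⟩
  rw [HNorm, this, csInf_singleton]

/-- Lemma (Lipschitz Approximation): any `g ∈ H` with `‖g‖_H ≤ 1` can be approximated
uniformly up to `ζ` by a `(1/ζ)`-Lipschitz function vanishing at `0`. -/
theorem lipschitz_approximation (g : ℝ → ℝ) (hg : MemH g) (hg1 : HNorm g ≤ 1)
    (ζ : ℝ) (hζ : 0 < ζ) :
    ∃ gζ : ℝ → ℝ, LipschitzWith (Real.toNNReal (1 / ζ)) gζ ∧ gζ 0 = 0 ∧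
      ∀ a : ℝ, |g a - gζ a| ≤ ζ := by
  obtain ⟨h, H⟩ := hg
  obtain ⟨hm, hi, he⟩ := id H
  have hnn : (0 : ℝ) ≤ ∫ t : ℝ, h t ^ 2 :=
    MeasureTheory.integral_nonneg fun t => sq_nonneg _
  have hsq1 : (∫ t : ℝ, h t ^ 2) ≤ 1 := by
    have h1 : Real.sqrt (∫ t : ℝ, h t ^ 2) ≤ 1 := by
      rw [← hnorm_eq_of_rep H]; exact hg1
    nlinarith [Real.sq_sqrt hnn, Real.sqrt_nonneg (∫ t : ℝ, h t ^ 2)]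
  set L : ℝ := 1 / ζ with hL
  have hLpos : 0 < L := by positivity
  set hc : ℝ → ℝ := fun t => max (min (h t) L) (-L) with hhc
  have hmc : Measurable hc := (hm.min measurable_const).max measurable_const
  have habs : ∀ t, |hc t| ≤ L := by
    intro t
    rw [abs_le]
    exact ⟨le_max_right _ _, max_le ((min_le_right _ _)) (by linarith)⟩
  have hIc : ∀ a b : ℝ, IntervalIntegrable hc volume a b := by
    intro a b
    rw [intervalIntegrable_iff]
    refine MeasureTheory.Integrable.mono' (g := fun _ => L)
      (MeasureTheory.integrableOn_const measure_Ioc_lt_top.ne)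
      hmc.aestronglyMeasurable (MeasureTheory.ae_of_all _ fun t => ?_)
    simpa using habs t
  have hIh : ∀ a b : ℝ, IntervalIntegrable h volume a b :=
    intervalIntegrable_of_sq_aux hm hi
  refine ⟨fun x => ∫ t in (0:ℝ)..x, hc t, ?_, intervalIntegral.integral_same, ?_⟩
  · apply LipschitzWith.of_dist_le_mul
    intro x y
    rw [Real.dist_eq, Real.dist_eq]
    have hsub : (∫ t in (0:ℝ)..x, hc t) - ∫ t in (0:ℝ)..y, hc t = ∫ t in y..x, hc t :=
      intervalIntegral.integral_interval_sub_left (hIc 0 x) (hIc 0 y)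
    rw [hsub, Real.coe_toNNReal _ (by positivity : (0:ℝ) ≤ 1/ζ)]
    have := intervalIntegral.norm_integral_le_of_norm_le_const
      (C := L) (f := hc) (a := y) (b := x) (fun t _ => by simpa using habs t)
    simpa [hL, abs_sub_comm] using this
  · intro a
    have key : ∀ t, |h t - hc t| ≤ ζ * h t ^ 2 := by
      intro t
      rcases le_total (h t) L with h1 | h1
      · rcases le_total (-L) (h t) with h2 | h2
        · have : hc t = h t := by
            show max (min (h t) L) (-L) = h t
            rw [min_eq_left h1, max_eq_left h2]
          rw [this, sub_self, abs_zero]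
          positivity
        · have : hc t = -L := by
            show max (min (h t) L) (-L) = -L
            rw [min_eq_left h1, max_eq_right h2]
          rw [this]
          have hx : h t ≤ -L := h2
          have h3 : ζ * h t ≤ -1 := by
            rw [hL] at hx
            calc ζ * h t ≤ ζ * (-(1/ζ)) := by nlinarith
              _ = -1 := by field_simp
          rw [abs_of_nonpos (by linarith)]
          nlinarith
      · have : hc t = L := by
          show max (min (h t) L) (-L) = L
          rw [min_eq_right h1, max_eq_left (by linarith)]
        rw [this]
        have h3 : 1 ≤ ζ * h t := by
          rw [hL] at h1
          calc (1:ℝ) = ζ * (1/ζ) := by field_simp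
            _ ≤ ζ * h t := by nlinarith
        rw [abs_of_nonneg (by linarith)]
        nlinarith
    have hint_diff : MeasureTheory.Integrable (fun t => |h t - hc t|) volume := by
      refine MeasureTheory.Integrable.mono' (hi.const_mul ζ)
        ((hm.sub hmc).abs.aestronglyMeasurable)
        (MeasureTheory.ae_of_all _ fun t => ?_)
      simpa [abs_abs] using key t
    have step1 : |g a - ∫ t in (0:ℝ)..a, hc t| ≤ ∫ t, |h t - hc t| := by
      rw [he a, ← intervalIntegral.integral_sub (hIh 0 a) (hIc 0 a)]
      calc |∫ t in (0:ℝ)..a, (h t - hc t)| = ‖∫ t in (0:ℝ)..a, (h t - hc t)‖ :=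
            (Real.norm_eq_abs _).symm
        _ ≤ ∫ t in Set.uIoc 0 a, ‖h t - hc t‖ :=
            intervalIntegral.norm_integral_le_integral_norm_uIoc
        _ ≤ ∫ t, |h t - hc t| := by
            simpa using MeasureTheory.setIntegral_le_integral hint_diff
              (MeasureTheory.ae_of_all _ fun t => abs_nonneg _)
    have step2 : (∫ t, |h t - hc t|) ≤ ζ := by
      calc (∫ t, |h t - hc t|) ≤ ∫ t, ζ * h t ^ 2 :=
            MeasureTheory.integral_mono hint_diff (hi.const_mul ζ) key
        _ = ζ * ∫ t : ℝ, h t ^ 2 := MeasureTheory.integral_const_mul ζ _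
        _ ≤ ζ * 1 := by nlinarith
        _ = ζ := mul_one ζ
    exact le_trans step1 step2

end
end

section
/- Let f ∈ F_∞ with Ω₀(f) < ∞. Then f is 1/2-Hölder continuous with constant Ω₀(f) with respect to the dual norm: for all x, x' ∈ ℝ^d, |f(x) − f(x')| ≤ Ω₀(f) √(‖x − x'‖*). -/
open MeasureTheory ProbabilityTheory Real

noncomputable section

lemma isNorm_zero {d : ℕ} {N : (Fin d → ℝ) → ℝ} (hN : IsNorm N) : N 0 = 0 :=
  (hN.2.1 0).mpr rfl

lemma isNorm_neg {d : ℕ} {N : (Fin d → ℝ) → ℝ} (hN : IsNorm N) (w : Fin d → ℝ) :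
    N (-w) = N w := by
  have := hN.2.2.1 (-1) w
  simpa using this

lemma isNorm_continuous {d : ℕ} {N : (Fin d → ℝ) → ℝ} (hN : IsNorm N) : Continuous N := by
  obtain ⟨hpos, hdef, hsmul, htri⟩ := hN
  set C : ℝ := ∑ a : Fin d, N (Pi.single a 1) with hC
  have hC0 : 0 ≤ C := Finset.sum_nonneg fun a _ => hpos _
  have hN0 : N 0 = 0 := (hdef 0).mpr rfl
  have hbound : ∀ w : Fin d → ℝ, N w ≤ C * ‖w‖ := by
    intro w
    set e : Fin d → (Fin d → ℝ) := fun a => Pi.single a (1 : ℝ) with he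
    have hw : w = ∑ a : Fin d, (w a) • e a := by
      funext b
      simp [he, Finset.sum_apply, Pi.single_apply]
    have hsum : ∀ (s : Finset (Fin d)) (v : Fin d → (Fin d → ℝ)),
        N (∑ a ∈ s, v a) ≤ ∑ a ∈ s, N (v a) := by
      intro s v
      induction s using Finset.cons_induction with
      | empty => simp [hN0]
      | cons a s ha ih =>
        rw [Finset.sum_cons, Finset.sum_cons]
        exact le_trans (htri _ _) (by linarith)
    calc N w = N (∑ a : Fin d, (w a) • e a) := by rw [← hw]
      _ ≤ ∑ a : Fin d, N ((w a) • e a) := hsum _ _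
      _ = ∑ a : Fin d, |w a| * N (e a) := by simp [hsmul]
      _ ≤ ∑ a : Fin d, ‖w‖ * N (e a) := by
          refine Finset.sum_le_sum fun a _ => mul_le_mul_of_nonneg_right ?_ (hpos _)
          rw [← Real.norm_eq_abs]
          exact norm_le_pi_norm w a
      _ = C * ‖w‖ := by simp [he, hC, mul_comm, Finset.sum_mul]
  have hlip : LipschitzWith C.toNNReal N := by
    apply LipschitzWith.of_dist_le_mul
    intro x y
    rw [Real.dist_eq, dist_eq_norm]
    have h1 : N x - N y ≤ N (x - y) := by
      have := htri (x - y) y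
      simpa using this
    have h2 : N y - N x ≤ N (x - y) := by
      have := htri (y - x) x
      have h3 : N (y - x) = N (x - y) := by
        rw [show y - x = -(x - y) by ring]
        have := hsmul (-1) (x - y)
        simpa using this
      simp only [sub_add_cancel] at this
      linarith
    have h4 : |N x - N y| ≤ N (x - y) := abs_sub_le_iff.mpr ⟨h1, h2⟩
    calc |N x - N y| ≤ N (x - y) := h4
      _ ≤ C * ‖x - y‖ := hbound _
      _ ≤ (C.toNNReal : ℝ) * ‖x - y‖ :=
          mul_le_mul_of_nonneg_right (Real.le_coe_toNNReal C) (norm_nonneg _)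
  exact hlip.continuous

lemma isNorm_lower {d : ℕ} {N : (Fin d → ℝ) → ℝ} (hN : IsNorm N) :
    ∃ c : ℝ, 0 < c ∧ ∀ w : Fin d → ℝ, c * ‖w‖ ≤ N w := by
  by_cases hd : ∃ v : Fin d → ℝ, v ≠ 0
  · obtain ⟨v, hv⟩ := hd
    have hvn : ‖v‖ ≠ 0 := norm_ne_zero_iff.mpr hv
    have hsph : (Metric.sphere (0 : Fin d → ℝ) 1).Nonempty := by
      refine ⟨‖v‖⁻¹ • v, ?_⟩
      rw [mem_sphere_zero_iff_norm, norm_smul, norm_inv, norm_norm]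
      field_simp
    obtain ⟨v₀, hv₀, hmin⟩ := (isCompact_sphere (0 : Fin d → ℝ) 1).exists_isMinOn hsph
      (isNorm_continuous hN).continuousOn
    have hv₀1 : ‖v₀‖ = 1 := mem_sphere_zero_iff_norm.mp hv₀
    have hv₀0 : v₀ ≠ 0 := by
      intro h
      rw [h, norm_zero] at hv₀1
      norm_num at hv₀1
    have hc : 0 < N v₀ := by
      rcases (hN.1 v₀).lt_or_eq with h | h
      · exact h
      · exact absurd ((hN.2.1 v₀).mp h.symm) hv₀0
    refine ⟨N v₀, hc, fun w => ?_⟩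
    by_cases hw : w = 0
    · simp [hw, isNorm_zero hN]
    · have hwn : (0:ℝ) < ‖w‖ := norm_pos_iff.mpr hw
      have h1 : ‖w‖⁻¹ • w ∈ Metric.sphere (0 : Fin d → ℝ) 1 := by
        rw [mem_sphere_zero_iff_norm, norm_smul, norm_inv, norm_norm]
        field_simp
      have h2 := isMinOn_iff.mp hmin _ h1
      have h3 : N (‖w‖⁻¹ • w) = ‖w‖⁻¹ * N w := by
        rw [hN.2.2.1, abs_of_nonneg (inv_nonneg.mpr hwn.le)]
      rw [h3] at h2
      calc N v₀ * ‖w‖ ≤ (‖w‖⁻¹ * N w) * ‖w‖ := mul_le_mul_of_nonneg_right h2 hwn.le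
        _ = N w := by field_simp
  · push_neg at hd
    exact ⟨1, one_pos, fun w => by simp [hd w, isNorm_zero hN]⟩

lemma dualNorm_bddAbove {d : ℕ} {N : (Fin d → ℝ) → ℝ} (hN : IsNorm N) (x : Fin d → ℝ) :
    BddAbove {s : ℝ | ∃ w, N w ≤ 1 ∧ s = dotp w x} := by
  obtain ⟨c, hc, hcl⟩ := isNorm_lower hN
  refine ⟨c⁻¹ * ∑ a, |x a|, ?_⟩
  rintro s ⟨w, hw, rfl⟩
  have hwn : ‖w‖ ≤ c⁻¹ := by
    rw [inv_eq_one_div, le_div_iff₀ hc]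
    nlinarith [hcl w, hN.1 w]
  calc dotp w x ≤ ∑ a, |w a * x a| := Finset.sum_le_sum fun a _ => le_abs_self _
    _ ≤ ∑ a, c⁻¹ * |x a| := by
        refine Finset.sum_le_sum fun a _ => ?_
        rw [abs_mul]
        refine mul_le_mul_of_nonneg_right (le_trans ?_ hwn) (abs_nonneg _)
        rw [← Real.norm_eq_abs]
        exact norm_le_pi_norm w a
    _ = c⁻¹ * ∑ a, |x a| := by rw [Finset.mul_sum]

lemma dualNorm_nonneg {d : ℕ} {N : (Fin d → ℝ) → ℝ} (hN : IsNorm N) (x : Fin d → ℝ) :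
    0 ≤ dualNorm N x := by
  apply le_csSup (dualNorm_bddAbove hN x)
  exact ⟨0, by simp [isNorm_zero hN, dotp]⟩

lemma dotp_neg {d : ℕ} (w x : Fin d → ℝ) : dotp (-w) x = -dotp w x := by
  simp [dotp, Finset.sum_neg_distrib]

lemma abs_dotp_le_dualNorm {d : ℕ} {N : (Fin d → ℝ) → ℝ} (hN : IsNorm N) {w : Fin d → ℝ}
    (hw : N w ≤ 1) (x : Fin d → ℝ) : |dotp w x| ≤ dualNorm N x := by
  have h1 : dotp w x ≤ dualNorm N x :=
    le_csSup (dualNorm_bddAbove hN x) ⟨w, hw, rfl⟩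
  have h2 : -dotp w x ≤ dualNorm N x :=
    le_csSup (dualNorm_bddAbove hN x) ⟨-w, by rw [isNorm_neg hN]; exact hw, (dotp_neg w x).symm⟩
  exact abs_le.mpr ⟨by linarith, h1⟩

lemma hnorm_nonneg (g : ℝ → ℝ) : 0 ≤ HNorm g := by
  apply Real.sInf_nonneg
  rintro r ⟨h, _, rfl⟩
  exact Real.sqrt_nonneg _

lemma sq_holder {h : ℝ → ℝ} (hm : Measurable h)
    (hi : MeasureTheory.Integrable (fun t => h t ^ 2)) (a b : ℝ) :
    |∫ t in b..a, h t| ≤ Real.sqrt (∫ t : ℝ, h t ^ 2) * Real.sqrt |a - b| := by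
  have hm2 : MemLp h 2 (volume : Measure ℝ) :=
    (memLp_two_iff_integrable_sq hm.aestronglyMeasurable).mpr hi
  set s : Set ℝ := Set.uIoc b a with hs
  haveI : Fact (volume s < ⊤) := ⟨by rw [hs, Set.uIoc]; exact measure_Ioc_lt_top⟩
  have h2 : |∫ t in b..a, h t| ≤ ∫ t in s, |h t| := by
    calc |∫ t in b..a, h t| = |∫ t in s, h t| :=
          intervalIntegral.abs_integral_eq_abs_integral_uIoc h
      _ ≤ ∫ t in s, |h t| := by
          simpa [Real.norm_eq_abs] using
            MeasureTheory.norm_integral_le_integral_norm (μ := volume.restrict s) h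
  have hpq : Real.HolderConjugate 2 2 := Real.holderConjugate_iff.mpr ⟨one_lt_two, by norm_num⟩
  have hmem : MemLp (fun t => |h t|) (ENNReal.ofReal 2) (volume.restrict s) := by
    have := (hm2.restrict s).abs
    rw [ENNReal.ofReal_ofNat]; exact this
  have hmem1 : MemLp (fun _ : ℝ => (1:ℝ)) (ENNReal.ofReal 2) (volume.restrict s) := by
    simpa [ENNReal.ofReal_ofNat] using
      (memLp_const (c := (1:ℝ)) (μ := volume.restrict s) (p := 2))
  have hH := MeasureTheory.integral_mul_le_Lp_mul_Lq_of_nonneg (μ := volume.restrict s) hpq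
      (f := fun t => |h t|) (g := fun _ => (1:ℝ))
      (Filter.Eventually.of_forall fun t => abs_nonneg _)
      (Filter.Eventually.of_forall fun _ => zero_le_one) hmem hmem1
  simp only [mul_one, Real.one_rpow] at hH
  have heq1 : ∫ t in s, |h t| ^ (2:ℝ) ∂volume = ∫ t in s, h t ^ 2 := by
    apply integral_congr_ae
    apply Filter.Eventually.of_forall
    intro t
    simp only [show ((2:ℝ)) = ((2:ℕ):ℝ) by norm_num, Real.rpow_natCast, sq_abs]
  have hle1 : ∫ t in s, h t ^ 2 ≤ ∫ t : ℝ, h t ^ 2 :=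
    setIntegral_le_integral hi (Filter.Eventually.of_forall fun t => sq_nonneg _)
  have heq2 : ∫ _t in s, (1:ℝ) ∂volume = |a - b| := by
    simp only [integral_const, smul_eq_mul, mul_one, Measure.real, Measure.restrict_apply_univ]
    rw [hs, Set.uIoc, Real.volume_Ioc,
      ENNReal.toReal_ofReal (sub_nonneg.mpr inf_le_sup)]
    rcases le_total b a with hba | hba
    · rw [sup_eq_right.mpr hba, inf_eq_left.mpr hba, abs_of_nonneg (by linarith)]
    · rw [sup_eq_left.mpr hba, inf_eq_right.mpr hba, abs_of_nonpos (by linarith)]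
      ring
  calc |∫ t in b..a, h t| ≤ ∫ t in s, |h t| := h2
    _ ≤ (∫ t in s, |h t| ^ (2:ℝ)) ^ (1/(2:ℝ)) * (∫ _t in s, (1:ℝ)) ^ (1/(2:ℝ)) := hH
    _ ≤ (∫ t : ℝ, h t ^ 2) ^ (1/(2:ℝ)) * |a - b| ^ (1/(2:ℝ)) := by
        rw [heq2]
        refine mul_le_mul_of_nonneg_right ?_ (Real.rpow_nonneg (abs_nonneg _) _)
        apply Real.rpow_le_rpow (by rw [heq1]; exact integral_nonneg fun t => sq_nonneg _)
          (by rw [heq1]; exact hle1) (by norm_num)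
    _ = Real.sqrt (∫ t : ℝ, h t ^ 2) * Real.sqrt |a - b| := by
        rw [Real.sqrt_eq_rpow, Real.sqrt_eq_rpow]

lemma memH_holder {g : ℝ → ℝ} (hg : MemH g) (a b : ℝ) :
    |g a - g b| ≤ HNorm g * Real.sqrt |a - b| := by
  obtain ⟨h₀, hh₀⟩ := hg
  have hne : {r : ℝ | ∃ h, IsHRep g h ∧ r = Real.sqrt (∫ t : ℝ, h t ^ 2)}.Nonempty :=
    ⟨_, h₀, hh₀, rfl⟩
  have key : ∀ r ∈ {r : ℝ | ∃ h, IsHRep g h ∧ r = Real.sqrt (∫ t : ℝ, h t ^ 2)},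
      |g a - g b| ≤ r * Real.sqrt |a - b| := by
    rintro r ⟨h, ⟨hmeas, hint, hrep⟩, rfl⟩
    have hII : ∀ u v : ℝ, IntervalIntegrable h volume u v := by
      intro u v
      rw [intervalIntegrable_iff]
      haveI : Fact (volume (Set.uIoc u v) < ⊤) := ⟨by rw [Set.uIoc]; exact measure_Ioc_lt_top⟩
      have hm2 : MemLp h 2 (volume : Measure ℝ) :=
        (memLp_two_iff_integrable_sq hmeas.aestronglyMeasurable).mpr hint
      exact memLp_one_iff_integrable.mp
        ((hm2.restrict (Set.uIoc u v)).mono_exponent (by norm_num))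
    have hdiff : g a - g b = ∫ t in b..a, h t := by
      rw [hrep a, hrep b, intervalIntegral.integral_interval_sub_left (hII 0 a) (hII 0 b)]
    rw [hdiff]
    exact sq_holder hmeas hint a b
  rcases (Real.sqrt_nonneg |a - b|).eq_or_lt with h0 | hpos
  · have h1 := key _ ⟨h₀, hh₀, rfl⟩
    rw [← h0] at h1 ⊢
    simpa using h1
  · have hle : |g a - g b| / Real.sqrt |a - b| ≤ HNorm g := by
      apply le_csInf hne
      intro r hr
      exact (div_le_iff₀ hpos).mpr (key r hr)
    calc |g a - g b| = (|g a - g b| / Real.sqrt |a - b|) * Real.sqrt |a - b| := by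
          field_simp
      _ ≤ HNorm g * Real.sqrt |a - b| :=
          mul_le_mul_of_nonneg_right hle (Real.sqrt_nonneg _)


/-- Lemma (Hölder continuity of functions in `F_∞`): if `f ∈ F_∞` (with all relevant
integrals existing, so `Ω₀(f) < ∞`), then `|f(x) − f(x')| ≤ Ω₀(f) √(‖x − x'‖_*)`. -/
theorem holder_continuity_of_memFInfty (d : ℕ) (N : (Fin d → ℝ) → ℝ) (hN : IsNorm N)
    (f : (Fin d → ℝ) → ℝ) (hf : MemFInfty N f) :
    ∀ x x' : Fin d → ℝ,
      |f x - f x'| ≤ Omega0 N f * Real.sqrt (dualNorm N (x - x')) := by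
  intro x x'
  have hD0 : 0 ≤ dualNorm N (x - x') := dualNorm_nonneg hN _
  have key : ∀ r ∈ {r : ℝ | ∃ c μ g, IsFRep N f c μ g ∧ r = ∫ w, HNorm (g w) ∂μ},
      |f x - f x'| ≤ r * Real.sqrt (dualNorm N (x - x')) := by
    rintro r ⟨c, μ, g, ⟨hprob, hsph, hmemH, hIntg, hIntH, hfeq⟩, rfl⟩
    have hdiff : f x - f x' = ∫ w, (g w (dotp w x) - g w (dotp w x')) ∂μ := by
      rw [hfeq x, hfeq x', integral_sub (hIntg x) (hIntg x')]
      ring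
    have hb : ∀ᵐ w ∂μ, ‖g w (dotp w x) - g w (dotp w x')‖ ≤
        HNorm (g w) * Real.sqrt (dualNorm N (x - x')) := by
      filter_upwards [hsph] with w hw
      rw [Real.norm_eq_abs]
      calc |g w (dotp w x) - g w (dotp w x')|
          ≤ HNorm (g w) * Real.sqrt |dotp w x - dotp w x'| := memH_holder (hmemH w) _ _
        _ ≤ HNorm (g w) * Real.sqrt (dualNorm N (x - x')) := by
            refine mul_le_mul_of_nonneg_left ?_ (hnorm_nonneg _)
            refine Real.sqrt_le_sqrt ?_
            have hsub : dotp w x - dotp w x' = dotp w (x - x') := by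
              simp [dotp, mul_sub, Finset.sum_sub_distrib]
            rw [hsub]
            exact abs_dotp_le_dualNorm hN (le_of_eq hw) _
    calc |f x - f x'|
        = ‖∫ w, (g w (dotp w x) - g w (dotp w x')) ∂μ‖ := by
          rw [hdiff, Real.norm_eq_abs]
      _ ≤ ∫ w, HNorm (g w) * Real.sqrt (dualNorm N (x - x')) ∂μ :=
          norm_integral_le_of_norm_le (hIntH.mul_const _) hb
      _ = (∫ w, HNorm (g w) ∂μ) * Real.sqrt (dualNorm N (x - x')) := integral_mul_const _ _
  obtain ⟨c, μ, g, hrep⟩ := hf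
  have hne : {r : ℝ | ∃ c μ g, IsFRep N f c μ g ∧ r = ∫ w, HNorm (g w) ∂μ}.Nonempty :=
    ⟨_, c, μ, g, hrep, rfl⟩
  rcases (Real.sqrt_nonneg (dualNorm N (x - x'))).eq_or_lt with h0 | hpos
  · have h1 := key _ hne.some_mem
    rw [← h0] at h1 ⊢
    simpa using h1
  · have hle : |f x - f x'| / Real.sqrt (dualNorm N (x - x')) ≤ Omega0 N f := by
      rw [Omega0]
      apply le_csInf hne
      intro r hr
      exact (div_le_iff₀ hpos).mpr (key r hr)
    calc |f x - f x'|
        = (|f x - f x'| / Real.sqrt (dualNorm N (x - x'))) * Real.sqrt (dualNorm N (x - x')) := by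
          field_simp
      _ ≤ Omega0 N f * Real.sqrt (dualNorm N (x - x')) :=
          mul_le_mul_of_nonneg_right hle (Real.sqrt_nonneg _)

end
end

section
/- Let n ≥ 1, let K ∈ ℝ^{n×n} be symmetric positive semidefinite, Y ∈ ℝ^n, and λ > 0. Set Π = I_n − (1/n)𝟙𝟙ᵀ, K̃ = ΠKΠ, Ỹ = ΠY, α* = (K̃ + nλ I_n)^{−1} Ỹ and c* = (𝟙ᵀY)/n − (𝟙ᵀKα*)/n. Then (α*, c*) minimizes the function (α, c) ↦ (1/(2n)) ‖Y − Kα − c𝟙‖₂² + (λ/2) αᵀKα over ℝ^n × ℝ, and the minimal value equals (λ/2) Ỹᵀ (K̃ + λ n I_n)^{−1} Ỹ. -/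
open MeasureTheory ProbabilityTheory Real

noncomputable section

open Matrix in
/-- Lemma (Optimisation for Fixed Particles): closed-form solution and value of the
regularised kernel ridge regression problem with unregularised intercept. -/
theorem kernel_ridge_closed_form (n : ℕ) (hn : 1 ≤ n)
    (K : Matrix (Fin n) (Fin n) ℝ) (hK : K.PosSemidef) (Y : Fin n → ℝ)
    (lam : ℝ) (hlam : 0 < lam) :
    let ones : Fin n → ℝ := fun _ => 1
    let P : Matrix (Fin n) (Fin n) ℝ := 1 - (n : ℝ)⁻¹ • Matrix.vecMulVec ones ones
    let Kt : Matrix (Fin n) (Fin n) ℝ := P * K * P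
    let Yt : Fin n → ℝ := P.mulVec Y
    let αs : Fin n → ℝ := (Kt + ((n : ℝ) * lam) • (1 : Matrix (Fin n) (Fin n) ℝ))⁻¹.mulVec Yt
    let cs : ℝ := (∑ i, Y i) / n - (∑ i, K.mulVec αs i) / n
    let obj : (Fin n → ℝ) → ℝ → ℝ := fun α c =>
      (2 * (n : ℝ))⁻¹ * ∑ i, (Y i - K.mulVec α i - c) ^ 2 + lam / 2 * (α ⬝ᵥ K.mulVec α)
    (∀ (α : Fin n → ℝ) (c : ℝ), obj αs cs ≤ obj α c) ∧
      obj αs cs =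
        lam / 2 *
          (Yt ⬝ᵥ (Kt + (lam * (n : ℝ)) • (1 : Matrix (Fin n) (Fin n) ℝ))⁻¹.mulVec Yt) := by
  intro ones P Kt Yt αs cs obj
  have hn0 : (0:ℝ) < (n:ℝ) := by exact_mod_cast hn.trans_lt' (by norm_num)
  have hPsymm : Pᵀ = P := by
    ext i j
    simp [P, Matrix.one_apply, Matrix.vecMulVec_apply, ones, eq_comm]
  have hPH : Pᴴ = P := by
    ext i j
    simpa using (congrFun (congrFun hPsymm j) i).symm
  have hKsymm : Kᵀ = K := by
    ext i j
    simpa using congrFun (congrFun hK.1 i) j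
  have hJJ : (Matrix.vecMulVec ones ones) * (Matrix.vecMulVec ones ones)
      = (n:ℝ) • Matrix.vecMulVec ones ones := by
    ext i j; simp [Matrix.mul_apply, Matrix.vecMulVec_apply, ones]
  have hPP : P * P = P := by
    have h1 : ((n:ℝ)⁻¹ * ((n:ℝ)⁻¹ * (n:ℝ))) = (n:ℝ)⁻¹ := by field_simp
    simp only [P, sub_mul, mul_sub, one_mul, mul_one, Matrix.smul_mul, Matrix.mul_smul,
      hJJ, smul_smul, h1]
    abel
  have hPv : ∀ (v : Fin n → ℝ) (i : Fin n), (P *ᵥ v) i = v i - (∑ j, v j) / n := by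
    intro v i
    simp [P, Matrix.mulVec, dotProduct, Matrix.one_apply, Matrix.vecMulVec_apply, ones,
      sub_mul, Finset.sum_sub_distrib, Finset.sum_ite_eq, div_eq_inv_mul, Finset.mul_sum]
  -- positive definiteness of the regularized matrix
  set A : Matrix (Fin n) (Fin n) ℝ := Kt + ((n : ℝ) * lam) • (1 : Matrix (Fin n) (Fin n) ℝ)
    with hAdef
  have hKtPSD : Kt.PosSemidef := by
    have h := hK.mul_mul_conjTranspose_same P
    rwa [hPH] at h
  have hDI : (((n:ℝ)*lam) • (1 : Matrix (Fin n) (Fin n) ℝ)).PosDef := by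
    rw [Matrix.smul_one_eq_diagonal]
    refine Matrix.posDef_diagonal_iff.mpr fun i => by positivity
  have hA : A.PosDef := Matrix.PosDef.posSemidef_add hKtPSD hDI
  have hAdet : IsUnit A.det := hA.det_pos.ne'.isUnit
  have hAαs : A *ᵥ αs = Yt := by
    show A *ᵥ (A⁻¹ *ᵥ Yt) = Yt
    rw [Matrix.mulVec_mulVec, Matrix.mul_nonsing_inv _ hAdet, Matrix.one_mulVec]
  have hsplit : Kt *ᵥ αs + ((n:ℝ)*lam) • αs = Yt := by
    rw [← hAαs, hAdef, Matrix.add_mulVec, Matrix.smul_mulVec, Matrix.one_mulVec]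
  have hPa : P *ᵥ αs = αs := by
    have h1 : P *ᵥ (Kt *ᵥ αs) = Kt *ᵥ αs := by
      rw [Matrix.mulVec_mulVec]
      have hPKt : P * Kt = Kt := by
        show P * (P * K * P) = P * K * P
        rw [← Matrix.mul_assoc, ← Matrix.mul_assoc, hPP]
      rw [hPKt]
    have h2 : P *ᵥ Yt = Yt := by
      show P *ᵥ (P *ᵥ Y) = P *ᵥ Y
      rw [Matrix.mulVec_mulVec, hPP]
    have h3 : P *ᵥ (((n:ℝ)*lam) • αs) = ((n:ℝ)*lam) • (P *ᵥ αs) := by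
      rw [Matrix.mulVec_smul]
    have h4 : ((n:ℝ)*lam) • (P *ᵥ αs) = ((n:ℝ)*lam) • αs := by
      have h := congrArg (P *ᵥ ·) hsplit
      simp only [Matrix.mulVec_add, h1, h2, h3] at h
      exact add_left_cancel (h.trans hsplit.symm)
    have hnl : ((n:ℝ)*lam) ≠ 0 := by positivity
    funext i
    have h := congrFun h4 i
    simp only [Pi.smul_apply, smul_eq_mul] at h
    exact mul_left_cancel₀ hnl h
  -- the mean of αs is zero
  have hsum : ∑ i, αs i = 0 := by
    have h := congrArg (fun v : Fin n → ℝ => ∑ i, v i) hPa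
    simp only [hPv] at h
    rw [Finset.sum_sub_distrib, Finset.sum_const, Finset.card_univ, Fintype.card_fin,
      nsmul_eq_mul] at h
    have hcan : (n:ℝ) * ((∑ i, αs i)/n) = ∑ i, αs i := by field_simp
    linarith [h, hcan]
  -- the residual identity
  have hv : P *ᵥ (Y - K *ᵥ αs) = ((n:ℝ)*lam) • αs := by
    have h1 : P *ᵥ (K *ᵥ αs) = Kt *ᵥ αs := by
      conv_lhs => rw [← hPa]
      rw [Matrix.mulVec_mulVec, Matrix.mulVec_mulVec]
    rw [Matrix.mulVec_sub, h1]
    have : (P *ᵥ Y) = Yt := rfl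
    rw [this, ← hsplit]
    abel
  have hr : ∀ i, Y i - (K *ᵥ αs) i - cs = ((n:ℝ)*lam) * αs i := by
    intro i
    have h := congrFun hv i
    rw [hPv] at h
    simp only [Pi.sub_apply, Pi.smul_apply, smul_eq_mul] at h
    rw [Finset.sum_sub_distrib, sub_div] at h
    have hcs : cs = (∑ i, Y i)/n - (∑ i, (K *ᵥ αs) i)/n := rfl
    rw [hcs]
    linarith
  -- symmetry of K as a bilinear form
  have hDsym : ∀ u v : Fin n → ℝ, u ⬝ᵥ (K *ᵥ v) = v ⬝ᵥ (K *ᵥ u) := by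
    intro u v
    rw [Matrix.dotProduct_mulVec, ← Matrix.mulVec_transpose, hKsymm, dotProduct_comm]
  -- value of the objective at the optimum
  have hobj0 : obj αs cs
      = (2*(n:ℝ))⁻¹ * (((n:ℝ)*lam)^2 * ∑ i, αs i^2) + lam/2 * (αs ⬝ᵥ K *ᵥ αs) := by
    have h : ∑ i, (Y i - (K *ᵥ αs) i - cs)^2 = ((n:ℝ)*lam)^2 * ∑ i, αs i^2 := by
      rw [Finset.mul_sum]
      exact Finset.sum_congr rfl fun i _ => by rw [hr i]; ring
    calc obj αs cs = (2*(n:ℝ))⁻¹ * ∑ i, (Y i - (K *ᵥ αs) i - cs)^2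
          + lam/2 * (αs ⬝ᵥ K *ᵥ αs) := rfl
      _ = _ := by rw [h]
  constructor
  · -- optimality
    intro α c
    set δ : Fin n → ℝ := α - αs with hδ
    have hαeq : α = αs + δ := by funext j; simp [hδ]
    have hterm : ∀ i, Y i - (K *ᵥ α) i - c
        = ((n:ℝ)*lam) * αs i - ((K *ᵥ δ) i + (c - cs)) := by
      intro i
      have hKα : (K *ᵥ α) i = (K *ᵥ αs) i + (K *ᵥ δ) i := by
        rw [hαeq, Matrix.mulVec_add]; rfl
      have h := hr i
      rw [hKα]; linarith
    have hS : ∑ i, (Y i - (K *ᵥ α) i - c)^2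
        = ((n:ℝ)*lam)^2 * (∑ i, αs i^2)
          - 2*((n:ℝ)*lam) * (αs ⬝ᵥ (K *ᵥ δ))
          + ∑ i, ((K *ᵥ δ) i + (c - cs))^2 := by
      have h1 : ∑ i, (Y i - (K *ᵥ α) i - c)^2
          = ∑ i, (((n:ℝ)*lam)^2 * αs i^2
              - 2*((n:ℝ)*lam) * (αs i * (K *ᵥ δ) i)
              - 2*((n:ℝ)*lam)*(c - cs) * αs i
              + ((K *ᵥ δ) i + (c - cs))^2) := by
        exact Finset.sum_congr rfl fun i _ => by rw [hterm i]; ring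
      rw [h1]
      rw [Finset.sum_add_distrib, Finset.sum_sub_distrib, Finset.sum_sub_distrib,
        ← Finset.mul_sum, ← Finset.mul_sum, ← Finset.mul_sum, hsum]
      have hdot : αs ⬝ᵥ (K *ᵥ δ) = ∑ i, αs i * (K *ᵥ δ) i := rfl
      rw [hdot]; ring
    have hαKα : α ⬝ᵥ K *ᵥ α
        = αs ⬝ᵥ K *ᵥ αs + 2*(αs ⬝ᵥ (K *ᵥ δ)) + δ ⬝ᵥ K *ᵥ δ := by
      rw [hαeq, Matrix.mulVec_add, dotProduct_add, add_dotProduct,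
        add_dotProduct, hDsym δ αs]
      ring
    have hobj1 : obj α c = obj αs cs
        + (2*(n:ℝ))⁻¹ * (∑ i, ((K *ᵥ δ) i + (c - cs))^2)
        + lam/2 * (δ ⬝ᵥ K *ᵥ δ) := by
      have hstart : obj α c = (2*(n:ℝ))⁻¹ * ∑ i, (Y i - (K *ᵥ α) i - c)^2
          + lam/2 * (α ⬝ᵥ K *ᵥ α) := rfl
      rw [hstart, hS, hαKα, hobj0]
      field_simp
      ring
    have hsq : 0 ≤ ∑ i, ((K *ᵥ δ) i + (c - cs))^2 :=
      Finset.sum_nonneg fun i _ => sq_nonneg _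
    have hqd : 0 ≤ δ ⬝ᵥ K *ᵥ δ := by
      have h := hK.dotProduct_mulVec_nonneg δ
      simpa using h
    have h2n : 0 < (2*(n:ℝ))⁻¹ := by positivity
    rw [hobj1]
    nlinarith [mul_nonneg h2n.le hsq, mul_nonneg (by positivity : (0:ℝ) ≤ lam/2) hqd]
  · -- value
    rw [show (lam * (n:ℝ)) = ((n:ℝ) * lam) from mul_comm _ _]
    show obj αs cs = lam/2 * (Yt ⬝ᵥ αs)
    have hKtαs : αs ⬝ᵥ (Kt *ᵥ αs) = αs ⬝ᵥ (K *ᵥ αs) := by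
      have h1 : Kt *ᵥ αs = P *ᵥ (K *ᵥ αs) := by
        conv_rhs => rw [← hPa, Matrix.mulVec_mulVec, Matrix.mulVec_mulVec]
      rw [h1, Matrix.dotProduct_mulVec, ← Matrix.mulVec_transpose, hPsymm, hPa]
    have hself : αs ⬝ᵥ αs = ∑ i, αs i^2 :=
      Finset.sum_congr rfl fun i _ => by ring
    have hYtαs : Yt ⬝ᵥ αs = αs ⬝ᵥ (K *ᵥ αs) + ((n:ℝ)*lam) * (∑ i, αs i^2) := by
      rw [← hsplit, add_dotProduct, smul_dotProduct,
        dotProduct_comm (Kt *ᵥ αs) αs, hKtαs, hself, smul_eq_mul]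
    rw [hobj0, hYtαs]
    field_simp
    ring

end
end

section
/- Let K_1,…,K_m ∈ ℝ^{n×n} be symmetric positive semidefinite matrices, β_1,…,β_m > 0, and α ∈ ℝ^n. Set z = (1/m) Σ_{j=1}^m β_j K_j α, and for j ∈ [m] let α^{(j)} = β_j α. Then (α^{(1)},…,α^{(m)}) solves the constrained problem: for every (γ^{(1)},…,γ^{(m)}) ∈ (ℝ^n)^m with (1/m) Σ_{j=1}^m K_j γ^{(j)} = z, one has (1/(2m)) Σ_{j=1}^m (α^{(j)})ᵀ K_j α^{(j)} / β_j ≤ (1/(2m)) Σ_{j=1}^m (γ^{(j)})ᵀ K_j γ^{(j)} / β_j; equivalently, (1/(2m)) Σ_{j=1}^m β_j αᵀ K_j α ≤ (1/(2m)) Σ_{j=1}^m (γ^{(j)})ᵀ K_j γ^{(j)} / β_j for all such feasible (γ^{(j)})_j. -/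
open MeasureTheory ProbabilityTheory Real

noncomputable section

open Matrix in
/-- Key step of the representer-theorem reformulation: under the linear constraint
`(1/m) Σ_j K_j γ⁽ʲ⁾ = (1/m) Σ_j β_j K_j α`, the choice `γ⁽ʲ⁾ = β_j α` minimises
`(1/(2m)) Σ_j (γ⁽ʲ⁾)ᵀ K_j γ⁽ʲ⁾ / β_j`. -/
theorem representer_constrained_minimum (n m : ℕ) (K : Fin m → Matrix (Fin n) (Fin n) ℝ)
    (hK : ∀ j, (K j).PosSemidef) (β : Fin m → ℝ) (hβ : ∀ j, 0 < β j)
    (α : Fin n → ℝ) (γ : Fin m → Fin n → ℝ)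
    (hfeas : (m : ℝ)⁻¹ • ∑ j, (K j).mulVec (γ j) =
      (m : ℝ)⁻¹ • ∑ j, β j • (K j).mulVec α) :
    (2 * (m : ℝ))⁻¹ * ∑ j, (β j • α) ⬝ᵥ (K j).mulVec (β j • α) / β j ≤
      (2 * (m : ℝ))⁻¹ * ∑ j, γ j ⬝ᵥ (K j).mulVec (γ j) / β j := by
  rcases Nat.eq_zero_or_pos m with hm | hm
  · subst hm; simp
  have hmne : (m : ℝ) ≠ 0 := Nat.cast_ne_zero.mpr hm.ne'
  have hsum : ∑ j, (K j).mulVec (γ j) = ∑ j, β j • (K j).mulVec α :=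
    smul_right_injective _ (inv_ne_zero hmne) hfeas
  -- symmetry lemma
  have hsymm : ∀ j (x y : Fin n → ℝ),
      x ⬝ᵥ (K j).mulVec y = y ⬝ᵥ (K j).mulVec x := by
    intro j x y
    have hA : (K j)ᵀ = K j := by
      have := (hK j).1
      rwa [Matrix.IsHermitian, Matrix.conjTranspose_eq_transpose_of_trivial] at this
    rw [Matrix.dotProduct_mulVec, ← Matrix.mulVec_transpose, hA, dotProduct_comm]
  have key : ∀ j, 2 * (α ⬝ᵥ (K j).mulVec (γ j)) - β j * (α ⬝ᵥ (K j).mulVec α)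
      ≤ γ j ⬝ᵥ (K j).mulVec (γ j) / β j := by
    intro j
    have hb := hβ j
    rw [le_div_iff₀ hb]
    have h0 := (hK j).dotProduct_mulVec_nonneg (γ j - β j • α)
    simp only [Matrix.mulVec_sub, Matrix.mulVec_smul, sub_dotProduct,
      dotProduct_sub, smul_dotProduct, dotProduct_smul,
      smul_eq_mul, RCLike.star_def, starRingEnd_apply, star_trivial] at h0
    have hsy := hsymm j α (γ j)
    nlinarith [h0, hsy, sq_nonneg (β j)]
  -- rewrite LHS terms
  have hL : ∀ j, (β j • α) ⬝ᵥ (K j).mulVec (β j • α) / β j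
      = β j * (α ⬝ᵥ (K j).mulVec α) := by
    intro j
    have hb := (hβ j).ne'
    rw [Matrix.mulVec_smul, smul_dotProduct, dotProduct_smul,
      smul_eq_mul, smul_eq_mul]
    field_simp
  have hds : ∀ (f : Fin m → Fin n → ℝ), α ⬝ᵥ (∑ j, f j) = ∑ j, α ⬝ᵥ f j := by
    intro f
    simp only [dotProduct, Finset.sum_apply, Finset.mul_sum]
    exact Finset.sum_comm

  have hconstr : ∑ j, α ⬝ᵥ (K j).mulVec (γ j) = ∑ j, β j * (α ⬝ᵥ (K j).mulVec α) := by
    have : α ⬝ᵥ (∑ j, (K j).mulVec (γ j)) = α ⬝ᵥ (∑ j, β j • (K j).mulVec α) := by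
      rw [hsum]
    rw [hds, hds] at this
    simpa [dotProduct_smul, smul_eq_mul] using this
  have hmain : ∑ j, (β j • α) ⬝ᵥ (K j).mulVec (β j • α) / β j
      ≤ ∑ j, γ j ⬝ᵥ (K j).mulVec (γ j) / β j := by
    calc ∑ j, (β j • α) ⬝ᵥ (K j).mulVec (β j • α) / β j
        = ∑ j, β j * (α ⬝ᵥ (K j).mulVec α) := by
          exact Finset.sum_congr rfl (fun j _ => hL j)
      _ = ∑ j, (2 * (α ⬝ᵥ (K j).mulVec (γ j)) - β j * (α ⬝ᵥ (K j).mulVec α)) := by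
          rw [Finset.sum_sub_distrib, ← Finset.mul_sum, hconstr]
          ring
      _ ≤ ∑ j, γ j ⬝ᵥ (K j).mulVec (γ j) / β j :=
          Finset.sum_le_sum (fun j _ => key j)
  have hpos : (0:ℝ) ≤ (2 * (m : ℝ))⁻¹ := by positivity
  exact mul_le_mul_of_nonneg_left hmain hpos

end
end

section
/- Fix x_1,…,x_n ∈ ℝ^d, Y ∈ ℝ^n, λ > 0 and m ≥ 1. For W = (w_1,…,w_m) ∈ (ℝ^d)^m let K(W) = (1/m) Σ_{j=1}^m K^{(w_j)}, Π = I_n − (1/n)𝟙𝟙ᵀ, K̃ = ΠK(W)Π, Ỹ = ΠY, and G(W) = (λ/2) Ỹᵀ (K̃ + λ n I_n)^{−1} Ỹ. Let j ∈ [m] and suppose W is such that w_jᵀ(x_i − x_{i'}) ≠ 0 for all i ≠ i' with x_i ≠ x_{i'}. Then, the other particles being fixed, the map w_j ↦ G(W) is differentiable at w_j with gradient ∂G/∂w_j = (λ/(4m)) Σ_{i,i'=1}^n z_i z_{i'} sign(w_jᵀ(x_i − x_{i'})) (x_i − x_{i'}), where z = (K̃ + nλ I_n)^{−1} Ỹ.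 -/
open MeasureTheory ProbabilityTheory Real

noncomputable section

lemma brownian_rep (a b : ℝ) :
    brownianK a b = Real.sign a * Real.sign b * (volume (Set.uIoc 0 a ∩ Set.uIoc 0 b)).toReal := by
  have hioc : ∀ u v : ℝ, u ≤ v → Set.uIoc u v = Set.Ioc u v := fun u v h => by
    rw [Set.uIoc, min_eq_left h, max_eq_right h]
  have hioc' : ∀ u v : ℝ, v ≤ u → Set.uIoc u v = Set.Ioc v u := fun u v h => by
    rw [Set.uIoc, min_eq_right h, max_eq_left h]
  rcases lt_trichotomy a 0 with ha | rfl | ha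
  · rcases lt_trichotomy b 0 with hb | rfl | hb
    · rw [hioc' 0 a ha.le, hioc' 0 b hb.le, Set.Ioc_inter_Ioc,
        Real.sign_of_neg ha, Real.sign_of_neg hb]
      rcases le_total a b with h | h
      · rw [max_eq_right h, min_self, Real.volume_Ioc,
          ENNReal.toReal_ofReal (by linarith), brownianK,
          abs_of_neg ha, abs_of_neg hb, abs_of_nonpos (by linarith : a - b ≤ 0)]
        ring
      · rw [max_eq_left h, min_self, Real.volume_Ioc,
          ENNReal.toReal_ofReal (by linarith), brownianK,
          abs_of_neg ha, abs_of_neg hb, abs_of_nonneg (by linarith : (0:ℝ) ≤ a - b)]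
        ring
    · simp [brownianK]
    · rw [hioc' 0 a ha.le, hioc 0 b hb.le, Set.Ioc_inter_Ioc,
        max_eq_right ha.le, min_eq_left hb.le, Set.Ioc_self,
        Real.sign_of_neg ha, Real.sign_of_pos hb]
      rw [brownianK, abs_of_neg ha, abs_of_pos hb, abs_of_nonpos (by linarith : a - b ≤ 0)]
      simp
      ring
  · simp [brownianK]
  · rcases lt_trichotomy b 0 with hb | rfl | hb
    · rw [hioc 0 a ha.le, hioc' 0 b hb.le, Set.Ioc_inter_Ioc,
        max_eq_left hb.le, min_eq_right ha.le, Set.Ioc_self,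
        Real.sign_of_pos ha, Real.sign_of_neg hb]
      rw [brownianK, abs_of_pos ha, abs_of_neg hb, abs_of_nonneg (by linarith : (0:ℝ) ≤ a - b)]
      simp
    · simp [brownianK]
    · rw [hioc 0 a ha.le, hioc 0 b hb.le, Set.Ioc_inter_Ioc,
        Real.sign_of_pos ha, Real.sign_of_pos hb]
      rcases le_total a b with h | h
      · rw [min_eq_left h, max_self, Real.volume_Ioc,
          ENNReal.toReal_ofReal (by linarith), brownianK,
          abs_of_pos ha, abs_of_pos hb, abs_of_nonpos (by linarith : a - b ≤ 0)]
        ring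
      · rw [min_eq_right h, max_self, Real.volume_Ioc,
          ENNReal.toReal_ofReal (by linarith), brownianK,
          abs_of_pos ha, abs_of_pos hb, abs_of_nonneg (by linarith : (0:ℝ) ≤ a - b)]
        ring


lemma brownian_quadform_nonneg {n : ℕ} (a c : Fin n → ℝ) :
    0 ≤ ∑ i, ∑ i', c i * c i' * brownianK (a i) (a i') := by
  classical
  set f : Fin n → ℝ → ℝ :=
    fun i t => c i * Set.indicator (Set.uIoc 0 (a i)) (fun _ => Real.sign (a i)) t with hf
  have hprod : ∀ i i' : Fin n, (fun t => f i t * f i' t) =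
      (Set.uIoc 0 (a i) ∩ Set.uIoc 0 (a i')).indicator
        (fun _ => c i * c i' * (Real.sign (a i) * Real.sign (a i'))) := by
    intro i i'
    funext t
    by_cases h1 : t ∈ Set.uIoc 0 (a i) <;> by_cases h2 : t ∈ Set.uIoc 0 (a i') <;>
      simp [hf, Set.indicator_apply, h1, h2] <;> ring
  have hint : ∀ i i', Integrable (fun t => f i t * f i' t) volume := by
    intro i i'
    rw [hprod i i']
    refine (integrable_indicator_iff (measurableSet_uIoc.inter measurableSet_uIoc)).2 ?_
    refine integrableOn_const (LT.lt.ne ?_)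
    exact lt_of_le_of_lt (measure_mono Set.inter_subset_left)
      (by rw [Set.uIoc, Real.volume_Ioc]; exact ENNReal.ofReal_lt_top)
  have hval : ∀ i i', ∫ t, f i t * f i' t = c i * c i' * brownianK (a i) (a i') := by
    intro i i'
    rw [hprod i i', integral_indicator_const _ (measurableSet_uIoc.inter measurableSet_uIoc),
      brownian_rep]
    simp [smul_eq_mul]
    simp only [Measure.real]; ring
  have key : ∫ t, (∑ i, f i t) ^ 2 = ∑ i, ∑ i', c i * c i' * brownianK (a i) (a i') := by
    have hexp : ∀ t : ℝ, (∑ i, f i t) ^ 2 = ∑ i, ∑ i', f i t * f i' t := by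
      intro t; rw [sq, Finset.sum_mul_sum]
    calc ∫ t, (∑ i, f i t) ^ 2 = ∫ t, ∑ i, ∑ i', f i t * f i' t := by
          simp_rw [hexp]
      _ = ∑ i, ∑ i', ∫ t, f i t * f i' t := by
          rw [integral_finset_sum _ fun i _ => integrable_finset_sum _ fun i' _ => hint i i']
          exact Finset.sum_congr rfl fun i _ => integral_finset_sum _ fun i' _ => hint i i'
      _ = ∑ i, ∑ i', c i * c i' * brownianK (a i) (a i') := by
          exact Finset.sum_congr rfl fun i _ => Finset.sum_congr rfl fun i' _ => hval i i'
  rw [← key]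
  exact integral_nonneg fun t => sq_nonneg _

lemma signType_cast_eq_real_sign (t : ℝ) : (SignType.sign t : ℝ) = Real.sign t := by
  rcases lt_trichotomy t 0 with h | rfl | h
  · rw [Real.sign_of_neg h, sign_neg h]; simp
  · simp
  · rw [Real.sign_of_pos h, sign_pos h]; simp


set_option maxHeartbeats 1000000 in
open Matrix in
/-- Lemma (Gradient of `G`): with all other particles fixed, and assuming
`w_jᵀ(x_i − x_{i'}) ≠ 0` whenever `x_i ≠ x_{i'}`, the map `w_j ↦ G(W)` is differentiable
at `w_j` with the stated gradient. -/
theorem gradient_of_G (d n m : ℕ) (hn : 1 ≤ n) (hm : 1 ≤ m)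
    (x : Fin n → EuclideanSpace ℝ (Fin d)) (Y : Fin n → ℝ) (lam : ℝ) (hlam : 0 < lam)
    (w : Fin m → EuclideanSpace ℝ (Fin d)) (j : Fin m)
    (hdiff : ∀ i i' : Fin n, x i ≠ x i' → (∑ a, w j a * (x i a - x i' a)) ≠ 0) :
    let ones : Fin n → ℝ := fun _ => 1
    let P : Matrix (Fin n) (Fin n) ℝ := 1 - (n : ℝ)⁻¹ • Matrix.vecMulVec ones ones
    let Yt : Fin n → ℝ := P.mulVec Y
    let G : EuclideanSpace ℝ (Fin d) → ℝ := fun v =>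
      lam / 2 *
        (Yt ⬝ᵥ (P * ((m : ℝ)⁻¹ •
              ∑ j', KMat (fun i => (x i : Fin d → ℝ)) (Function.update w j v j')) * P +
            (lam * (n : ℝ)) • (1 : Matrix (Fin n) (Fin n) ℝ))⁻¹.mulVec Yt)
    let z : Fin n → ℝ :=
      (P * ((m : ℝ)⁻¹ • ∑ j', KMat (fun i => (x i : Fin d → ℝ)) (w j')) * P +
        ((n : ℝ) * lam) • (1 : Matrix (Fin n) (Fin n) ℝ))⁻¹.mulVec Yt
    HasGradientAt G
      ((lam / (4 * (m : ℝ))) •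
        ∑ i, ∑ i',
          (z i * z i' * Real.sign (∑ a, w j a * (x i a - x i' a))) • (x i - x i'))
      (w j) := by
  classical
  intro ones P Yt G z
  have hn0 : (n : ℝ) ≠ 0 := Nat.cast_ne_zero.2 (by omega)
  have hm0 : (m : ℝ) ≠ 0 := Nat.cast_ne_zero.2 (by omega)
  set x' : Fin n → Fin d → ℝ := fun i => (x i : Fin d → ℝ) with hx'
  -- `P` entry facts
  have hPapp : ∀ i k, P i k = (if i = k then (1:ℝ) else 0) - (n : ℝ)⁻¹ := by
    intro i k
    simp [P, Matrix.sub_apply, Matrix.one_apply, Matrix.vecMulVec_apply, ones]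
  have hPsymm : ∀ i k, P i k = P k i := by
    intro i k; rw [hPapp, hPapp]; by_cases h : i = k <;> simp [h, eq_comm]
  have hPsumcol : ∀ k, ∑ l, P l k = 0 := by
    intro k
    simp only [hPapp]
    rw [Finset.sum_sub_distrib]
    simp [Finset.sum_ite_eq, Finset.card_univ, mul_inv_cancel₀ hn0]
  have hPsumrow : ∀ i, ∑ l, P i l = 0 := by
    intro i; rw [← hPsumcol i]; exact Finset.sum_congr rfl fun l _ => hPsymm i l
  have hPP : P * P = P := by
    ext i k
    rw [Matrix.mul_apply]
    have : ∀ l, P i l * P l k = P i l * ((if l = k then (1:ℝ) else 0)) - P i l * (n:ℝ)⁻¹ := by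
      intro l; rw [hPapp l k]; ring
    simp_rw [this]
    rw [Finset.sum_sub_distrib, ← Finset.sum_mul, hPsumrow, zero_mul, sub_zero]
    simp [Finset.sum_ite_eq', mul_ite]
  have hones : ∀ i, ones i = (1:ℝ) := fun _ => rfl
  have hG : G = fun v => lam / 2 *
      (Yt ⬝ᵥ (P * ((m : ℝ)⁻¹ •
            ∑ j', KMat x' (Function.update w j v j')) * P +
          (lam * (n : ℝ)) • (1 : Matrix (Fin n) (Fin n) ℝ))⁻¹.mulVec Yt) := rfl
  have hzdef : z = (P * ((m : ℝ)⁻¹ • ∑ j', KMat x' (w j')) * P +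
      ((n : ℝ) * lam) • (1 : Matrix (Fin n) (Fin n) ℝ))⁻¹.mulVec Yt := rfl
  have hPYt : P.mulVec Yt = Yt := by
    show P *ᵥ (P *ᵥ Y) = P *ᵥ Y
    rw [Matrix.mulVec_mulVec, hPP]
  clear_value ones P Yt G z
  set Mf : EuclideanSpace ℝ (Fin d) → Matrix (Fin n) (Fin n) ℝ := fun v =>
    P * ((m : ℝ)⁻¹ • ∑ j', KMat x' (Function.update w j v j')) * P +
      (lam * (n : ℝ)) • (1 : Matrix (Fin n) (Fin n) ℝ) with hMf
  -- the absolute-difference matrix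
  set A : EuclideanSpace ℝ (Fin d) → Matrix (Fin n) (Fin n) ℝ :=
    fun v => Matrix.of fun p q => |∑ a, v a * (x p a - x q a)| with hA
  have hvanish1 : ∀ u : Fin n → ℝ, Matrix.vecMulVec u ones * P = 0 := by
    intro u; ext i k
    rw [Matrix.mul_apply]
    simp_rw [Matrix.vecMulVec_apply]
    simp_rw [hones, mul_one]
    rw [← Finset.mul_sum, hPsumcol, mul_zero]
    rfl
  have hvanish2 : ∀ u : Fin n → ℝ, P * Matrix.vecMulVec ones u = 0 := by
    intro u; ext i k
    rw [Matrix.mul_apply]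
    simp_rw [Matrix.vecMulVec_apply]
    simp_rw [hones, one_mul]
    rw [← Finset.sum_mul, hPsumrow, zero_mul]
    rfl
  have hPKP : ∀ v : EuclideanSpace ℝ (Fin d), P * KMat x' v * P = (-(2:ℝ)⁻¹) • (P * A v * P) := by
    intro v
    have hKdecomp : KMat x' v = (2:ℝ)⁻¹ •
        (Matrix.vecMulVec (fun i => |∑ a, v a * x' i a|) ones +
          Matrix.vecMulVec ones (fun i => |∑ a, v a * x' i a|) - A v) := by
      ext p q
      simp only [KMat, Matrix.of_apply, brownianK, dotp, Matrix.smul_apply, Matrix.sub_apply,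
        Matrix.add_apply, Matrix.vecMulVec_apply, smul_eq_mul]
      have : ∑ a, v a * (x p a - x q a) = (∑ a, v a * x' p a) - ∑ a, v a * x' q a := by
        rw [← Finset.sum_sub_distrib]
        exact Finset.sum_congr rfl fun a _ => by rw [hx']; ring
      rw [hA]
      simp only [Matrix.of_apply]
      simp_rw [hones]
      rw [this]
      ring
    rw [hKdecomp, Matrix.mul_smul, Matrix.smul_mul]
    rw [Matrix.mul_sub, Matrix.mul_add, Matrix.sub_mul, Matrix.add_mul]
    rw [Matrix.mul_assoc P (Matrix.vecMulVec _ ones) P, hvanish1, Matrix.mul_zero,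
      hvanish2, Matrix.zero_mul]
    rw [zero_add, zero_sub, smul_neg, neg_smul]
  -- split the sum over particles
  have hsplit : ∀ v : EuclideanSpace ℝ (Fin d),
      (∑ j', KMat x' (Function.update w j v j')) =
        KMat x' v + ∑ j' ∈ Finset.univ.erase j, KMat x' (w j') := by
    intro v
    rw [← Finset.add_sum_erase _ _ (Finset.mem_univ j), Function.update_self]
    congr 1
    exact Finset.sum_congr rfl fun j' hj' =>
      by rw [Function.update_of_ne (Finset.mem_erase.1 hj').1]
  set Cmat : Matrix (Fin n) (Fin n) ℝ :=
    P * ((m : ℝ)⁻¹ • ∑ j' ∈ Finset.univ.erase j, KMat x' (w j')) * P +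
      (lam * (n : ℝ)) • (1 : Matrix (Fin n) (Fin n) ℝ) with hCmat
  have hMfdecomp : ∀ v, Mf v = Cmat - (2 * (m : ℝ))⁻¹ • (P * A v * P) := by
    intro v
    rw [hMf]
    simp only []
    rw [hsplit, smul_add, Matrix.mul_add, Matrix.add_mul, hCmat]
    have h1 : P * ((m : ℝ)⁻¹ • KMat x' v) * P = -((2 * (m:ℝ))⁻¹ • (P * A v * P)) := by
      rw [Matrix.mul_smul, Matrix.smul_mul, hPKP, smul_smul, mul_inv]
      module
    rw [h1]
    abel
  -- entrywise formula
  have htriple : ∀ (B : Matrix (Fin n) (Fin n) ℝ) (i k : Fin n),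
      (P * B * P) i k = ∑ p, ∑ q, P i p * P q k * B p q := by
    intro B i k
    rw [Matrix.mul_apply]
    simp_rw [Matrix.mul_apply, Finset.sum_mul]
    rw [Finset.sum_comm]
    exact Finset.sum_congr rfl fun p _ => Finset.sum_congr rfl fun q _ => by ring
  have hentry : ∀ v (i k : Fin n), Mf v i k =
      Cmat i k - (2 * (m : ℝ))⁻¹ * ∑ p, ∑ q, P i p * P q k * A v p q := by
    intro v i k
    rw [hMfdecomp v, Matrix.sub_apply, Matrix.smul_apply, htriple, smul_eq_mul]
  -- derivative of the absolute values
  have hinner : ∀ (p q : Fin n) (v : EuclideanSpace ℝ (Fin d)),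
      (innerSL ℝ (x p - x q)) v = ∑ a, v a * (x p a - x q a) := by
    intro p q v
    rw [innerSL_apply_apply, PiLp.inner_apply]
    simp [mul_comm]
  have habs : ∀ p q : Fin n, HasFDerivAt (fun v : EuclideanSpace ℝ (Fin d) => A v p q)
      (Real.sign (∑ a, w j a * (x p a - x q a)) • innerSL ℝ (x p - x q)) (w j) := by
    intro p q
    have hfun : (fun v : EuclideanSpace ℝ (Fin d) => A v p q) =
        fun v => |(innerSL ℝ (x p - x q)) v| := by
      funext v
      rw [hA, hinner]
      rfl
    rw [hfun]
    by_cases hs : (∑ a, w j a * (x p a - x q a)) = 0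
    · have hxeq : x p = x q := by
        by_contra hne
        exact hdiff p q hne hs
      have hzero : (fun v : EuclideanSpace ℝ (Fin d) => |(innerSL ℝ (x p - x q)) v|)
          = fun _ => (0:ℝ) := by
        funext v
        rw [hinner]
        simp [hxeq]
      rw [hzero, hs, Real.sign_zero, zero_smul]
      exact hasFDerivAt_const 0 _
    · have hval : (innerSL ℝ (x p - x q)) (w j) = ∑ a, w j a * (x p a - x q a) := hinner p q _
      have h := ((innerSL ℝ (x p - x q)).hasFDerivAt (x := w j)).abs (by rw [hval]; exact hs)
      rw [hval, signType_cast_eq_real_sign] at h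
      exact h
  -- derivative of the matrix entries
  set s : Fin n → Fin n → ℝ := fun p q => ∑ a, w j a * (x p a - x q a) with hs
  set L : Fin n → Fin n → (EuclideanSpace ℝ (Fin d) →L[ℝ] ℝ) := fun i k =>
    -((2 * (m : ℝ))⁻¹ • ∑ p, ∑ q,
      (P i p * P q k) • (Real.sign (s p q) • innerSL ℝ (x p - x q))) with hL
  have hMderiv : ∀ i k, HasFDerivAt (fun v => Mf v i k) (L i k) (w j) := by
    intro i k
    have h1 : HasFDerivAt (fun v : EuclideanSpace ℝ (Fin d) => ∑ p, ∑ q, P i p * P q k * A v p q)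
        (∑ p, ∑ q, (P i p * P q k) • (Real.sign (s p q) • innerSL ℝ (x p - x q))) (w j) :=
      HasFDerivAt.fun_sum fun p _ => HasFDerivAt.fun_sum fun q _ => (habs p q).const_mul _
    have h2 := (h1.const_mul ((2 * (m : ℝ))⁻¹)).const_sub (Cmat i k)
    have hfun : (fun v => Mf v i k) =
        fun v => Cmat i k - (2 * (m : ℝ))⁻¹ * ∑ p, ∑ q, P i p * P q k * A v p q := by
      funext v; exact hentry v i k
    rw [hfun, hL]
    exact h2
  -- positive definiteness of `Mf (w j)`
  set B : Matrix (Fin n) (Fin n) ℝ := (m : ℝ)⁻¹ • ∑ j', KMat x' (w j') with hB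
  have hM0 : Mf (w j) = P * B * P + (lam * (n : ℝ)) • 1 := by
    rw [hMf]
    simp only [Function.update_eq_self]
    rfl
  have hKsymm : ∀ (u : Fin d → ℝ) (p q : Fin n), KMat x' u p q = KMat x' u q p := by
    intro u p q
    simp only [KMat, Matrix.of_apply, brownianK]
    rw [abs_sub_comm]
    ring
  have hBsymm : ∀ p q, B p q = B q p := by
    intro p q
    rw [hB]
    simp only [Matrix.smul_apply, Matrix.sum_apply]
    rw [Finset.sum_congr rfl fun j' _ => hKsymm (w j') p q]
  have hKform : ∀ (u : Fin d → ℝ) (c : Fin n → ℝ), 0 ≤ c ⬝ᵥ (KMat x' u).mulVec c := by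
    intro u c
    have heq : c ⬝ᵥ (KMat x' u).mulVec c =
        ∑ i, ∑ i', c i * c i' * brownianK (dotp u (x' i)) (dotp u (x' i')) := by
      simp only [dotProduct, Matrix.mulVec, KMat, Matrix.of_apply, Finset.mul_sum]
      exact Finset.sum_congr rfl fun i _ => Finset.sum_congr rfl fun i' _ => by ring
    rw [heq]
    exact brownian_quadform_nonneg _ _
  have hvecMulP : ∀ c : Fin n → ℝ, c ᵥ* P = P *ᵥ c := by
    intro c
    funext i
    simp only [Matrix.vecMul, Matrix.mulVec, dotProduct]
    exact Finset.sum_congr rfl fun l _ => by rw [hPsymm i l]; ring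
  have hform : ∀ c : Fin n → ℝ, c ≠ 0 → 0 < c ⬝ᵥ (Mf (w j)).mulVec c := by
    intro c hc
    rw [hM0, Matrix.add_mulVec, dotProduct_add]
    have hPBP : c ⬝ᵥ (P * B * P).mulVec c = (P.mulVec c) ⬝ᵥ B.mulVec (P.mulVec c) := by
      rw [← Matrix.mulVec_mulVec, ← Matrix.mulVec_mulVec, dotProduct_mulVec, hvecMulP]
    have hB1 : 0 ≤ (P.mulVec c) ⬝ᵥ B.mulVec (P.mulVec c) := by
      set u := P.mulVec c
      rw [hB, Matrix.smul_mulVec, dotProduct_smul]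
      refine smul_nonneg (by positivity) ?_
      have hsum : (∑ j', KMat x' (w j')).mulVec u = ∑ j', (KMat x' (w j')).mulVec u := by
        funext i
        simp [Matrix.mulVec, dotProduct, Matrix.sum_apply, Finset.sum_mul]
        exact Finset.sum_comm
      rw [hsum]
      have hdot : u ⬝ᵥ (∑ j', (KMat x' (w j')).mulVec u) = ∑ j', u ⬝ᵥ (KMat x' (w j')).mulVec u := by
        simp [dotProduct, Finset.mul_sum]
        exact Finset.sum_comm
      rw [hdot]
      exact Finset.sum_nonneg fun j' _ => hKform (w j') u
    have hid : c ⬝ᵥ ((lam * (n : ℝ)) • (1 : Matrix (Fin n) (Fin n) ℝ)).mulVec c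
        = (lam * (n : ℝ)) * (c ⬝ᵥ c) := by
      rw [Matrix.smul_mulVec, Matrix.one_mulVec, dotProduct_smul, smul_eq_mul]
    have hcc : 0 < c ⬝ᵥ c := by
      rcases (dotProduct_self_eq_zero (v := c)).ne.2 hc |>.lt_or_gt with h | h
      · exact absurd h (not_lt.2 (Finset.sum_nonneg fun i _ => mul_self_nonneg _))
      · exact h
    have hn1 : (1:ℝ) ≤ (n:ℝ) := by exact_mod_cast hn
    rw [hPBP, hid]
    have : 0 < lam * (n:ℝ) * (c ⬝ᵥ c) := by positivity
    linarith
  have hMsymmE : ∀ i k, Mf (w j) i k = Mf (w j) k i := by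
      intro i k
      rw [hM0]
      simp only [Matrix.add_apply, Matrix.smul_apply, Matrix.one_apply]
      have h1 : (P * B * P) i k = (P * B * P) k i := by
        rw [htriple, htriple, Finset.sum_comm]
        refine Finset.sum_congr rfl fun p _ => Finset.sum_congr rfl fun q _ => ?_
        rw [hPsymm i q, hPsymm p k, hBsymm q p]
        ring
      rw [h1]
      by_cases h : i = k <;> simp [h, eq_comm]
  have hHerm : (Mf (w j)).IsHermitian := by
    exact Matrix.ext fun i k => by
      rw [Matrix.conjTranspose_apply, star_trivial]
      exact hMsymmE k i
  have hposdef : (Mf (w j)).PosDef := by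
    refine Matrix.posDef_iff_dotProduct_mulVec.2 ⟨hHerm, fun c hc => ?_⟩
    have : star c = c := by
      funext i; exact star_trivial _
    rw [this]
    exact hform c hc
  have hdet0 : (Mf (w j)).det ≠ 0 := hposdef.det_pos.ne'
  have hunit0 : IsUnit (Mf (w j)).det := isUnit_iff_ne_zero.2 hdet0
  -- differentiability of determinant-like functions
  have hMdiffAt : ∀ i k, DifferentiableAt ℝ (fun v => Mf v i k) (w j) :=
    fun i k => (hMderiv i k).differentiableAt
  have hdet_of : ∀ (F : EuclideanSpace ℝ (Fin d) → Matrix (Fin n) (Fin n) ℝ),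
      (∀ p q, DifferentiableAt ℝ (fun v => F v p q) (w j)) →
      DifferentiableAt ℝ (fun v => (F v).det) (w j) := by
    intro F hF
    have hrew : (fun v => (F v).det) = fun v =>
        ∑ σ : Equiv.Perm (Fin n), ((Equiv.Perm.sign σ : ℤ) : ℝ) * ∏ l, F v (σ l) l := by
      funext v; rw [Matrix.det_apply']
    rw [hrew]
    refine DifferentiableAt.fun_sum fun σ _ => DifferentiableAt.const_mul ?_ _
    exact (HasFDerivAt.finset_prod fun l _ => (hF (σ l) l).hasFDerivAt).differentiableAt
  have hdetdiff : DifferentiableAt ℝ (fun v => (Mf v).det) (w j) := hdet_of Mf hMdiffAt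
  have hadjdiff : ∀ i k, DifferentiableAt ℝ (fun v => (Mf v).adjugate i k) (w j) := by
    intro i k
    have hrew : (fun v => (Mf v).adjugate i k)
        = fun v => ((Mf v).updateRow k (Pi.single i 1)).det := by
      funext v; rw [Matrix.adjugate_apply]
    rw [hrew]
    refine hdet_of _ fun p q => ?_
    by_cases h : p = k
    · simp only [Matrix.updateRow_apply, h, if_pos rfl]
      exact differentiableAt_const _
    · simp only [Matrix.updateRow_apply, if_neg h]
      exact hMdiffAt p q
  have hinvdiff : ∀ i k, DifferentiableAt ℝ (fun v => (Mf v)⁻¹ i k) (w j) := by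
    intro i k
    have hrew : (fun v => (Mf v)⁻¹ i k) = fun v => ((Mf v).det)⁻¹ * (Mf v).adjugate i k := by
      funext v
      rw [Matrix.inv_def, Matrix.smul_apply, Ring.inverse_eq_inv, smul_eq_mul]
    rw [hrew]
    exact (hdetdiff.inv hdet0).mul (hadjdiff i k)
  -- the solution vector and its derivative
  set ψ : Fin n → EuclideanSpace ℝ (Fin d) → ℝ := fun i v => ((Mf v)⁻¹.mulVec Yt) i with hψ
  have hψdiff : ∀ i, DifferentiableAt ℝ (ψ i) (w j) := by
    intro i
    have hrew : ψ i = fun v => ∑ k, (Mf v)⁻¹ i k * Yt k := by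
      funext v; rw [hψ]; rfl
    rw [hrew]
    exact DifferentiableAt.fun_sum fun k _ => (hinvdiff i k).mul_const _
  set Dψ : Fin n → (EuclideanSpace ℝ (Fin d) →L[ℝ] ℝ) := fun i => fderiv ℝ (ψ i) (w j) with hDψ
  have hψderiv : ∀ i, HasFDerivAt (ψ i) (Dψ i) (w j) := fun i => (hψdiff i).hasFDerivAt
  have hz : z = (Mf (w j))⁻¹.mulVec Yt := by
    rw [hzdef, hM0, mul_comm (n : ℝ) lam]
  have hz' : ∀ k, ψ k (w j) = z k := by
    intro k; rw [hz, hψ]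
  -- the key derivative identity
  have hevdet : ∀ᶠ v in nhds (w j), (Mf v).det ≠ 0 :=
    hdetdiff.continuousAt.eventually_ne hdet0
  have hkey : ∀ i : Fin n, (∑ k, Mf (w j) i k • Dψ k) + (∑ k, z k • L i k) = 0 := by
    intro i
    have hev : (fun v => ∑ k, Mf v i k * ψ k v) =ᶠ[nhds (w j)] fun _ => Yt i := by
      filter_upwards [hevdet] with v hv
      have hunit : IsUnit (Mf v).det := isUnit_iff_ne_zero.2 hv
      have hMN : (Mf v).mulVec ((Mf v)⁻¹.mulVec Yt) = Yt := by
        rw [Matrix.mulVec_mulVec, Matrix.mul_nonsing_inv _ hunit, Matrix.one_mulVec]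
      calc ∑ k, Mf v i k * ψ k v = ((Mf v).mulVec ((Mf v)⁻¹.mulVec Yt)) i := by
            rw [hψ]; rfl
        _ = Yt i := by rw [hMN]
    have h1 : HasFDerivAt (fun v => ∑ k, Mf v i k * ψ k v)
        (∑ k, (Mf (w j) i k • Dψ k + ψ k (w j) • L i k)) (w j) :=
      HasFDerivAt.fun_sum fun k _ => (hMderiv i k).mul (hψderiv k)
    have h2' : HasFDerivAt (fun _ : EuclideanSpace ℝ (Fin d) => Yt i)
        (0 : EuclideanSpace ℝ (Fin d) →L[ℝ] ℝ) (w j) := hasFDerivAt_const _ _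
    have h2 : HasFDerivAt (fun v => ∑ k, Mf v i k * ψ k v) 0 (w j) :=
      h2'.congr_of_eventuallyEq hev
    have h3 := h1.unique h2
    rw [Finset.sum_add_distrib] at h3
    rw [← h3]
    congr 1
    exact Finset.sum_congr rfl fun k _ => by rw [hz' k]
  have hMz : (Mf (w j)).mulVec z = Yt := by
    rw [hz, Matrix.mulVec_mulVec, Matrix.mul_nonsing_inv _ hunit0, Matrix.one_mulVec]
  -- commutation and P-invariance of z
  have hcomm : P * Mf (w j) = Mf (w j) * P := by
    rw [hM0, Matrix.mul_add, Matrix.add_mul]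
    congr 1
    · calc P * (P * B * P) = P * B * P := by rw [← Matrix.mul_assoc, ← Matrix.mul_assoc, hPP]
        _ = P * B * P * P := by rw [Matrix.mul_assoc (P * B) P P, hPP]
    · rw [Matrix.mul_smul, Matrix.smul_mul, Matrix.mul_one, Matrix.one_mul]
  have hcommInv : P * (Mf (w j))⁻¹ = (Mf (w j))⁻¹ * P := by
    have h1 : (Mf (w j))⁻¹ * Mf (w j) = 1 := Matrix.nonsing_inv_mul _ hunit0
    have h2 : Mf (w j) * (Mf (w j))⁻¹ = 1 := Matrix.mul_nonsing_inv _ hunit0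
    calc P * (Mf (w j))⁻¹ = (Mf (w j))⁻¹ * Mf (w j) * (P * (Mf (w j))⁻¹) := by
          rw [h1, one_mul]
      _ = (Mf (w j))⁻¹ * (Mf (w j) * P) * (Mf (w j))⁻¹ := by
          simp only [Matrix.mul_assoc]
      _ = (Mf (w j))⁻¹ * (P * Mf (w j)) * (Mf (w j))⁻¹ := by rw [← hcomm]
      _ = (Mf (w j))⁻¹ * P * (Mf (w j) * (Mf (w j))⁻¹) := by
          simp only [Matrix.mul_assoc]
      _ = (Mf (w j))⁻¹ * P := by rw [h2, Matrix.mul_one]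
  have hPz : P.mulVec z = z := by
    rw [hz, Matrix.mulVec_mulVec, hcommInv, ← Matrix.mulVec_mulVec, hPYt]
  -- quadratic-form conjugation
  have hconj : ∀ (Bm : Matrix (Fin n) (Fin n) ℝ) (c : Fin n → ℝ),
      c ⬝ᵥ (P * Bm * P).mulVec c = (P.mulVec c) ⬝ᵥ Bm.mulVec (P.mulVec c) := by
    intro Bm c
    rw [← Matrix.mulVec_mulVec, ← Matrix.mulVec_mulVec, dotProduct_mulVec, hvecMulP]
  have hvecMulM : ∀ c : Fin n → ℝ, c ᵥ* Mf (w j) = (Mf (w j)) *ᵥ c := by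
    intro c; funext i
    simp only [Matrix.vecMul, Matrix.mulVec, dotProduct]
    exact Finset.sum_congr rfl fun l _ => by rw [hMsymmE i l]; ring
  -- derivative of G
  have hGderiv : HasFDerivAt G ((lam / 2) • ∑ i, Yt i • Dψ i) (w j) := by
    have hGfun : G = fun v => lam / 2 * ∑ i, Yt i * ψ i v := by
      rw [hG]; funext v; simp only [hψ]; rfl
    rw [hGfun]
    exact (HasFDerivAt.fun_sum fun i (_ : i ∈ Finset.univ) =>
      (hψderiv i).const_mul (Yt i)).const_mul (lam / 2)
  rw [hasGradientAt_iff_hasFDerivAt]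
  have hfinal : (InnerProductSpace.toDual ℝ (EuclideanSpace ℝ (Fin d)))
      ((lam / (4 * (m : ℝ))) • ∑ i, ∑ i',
        (z i * z i' * Real.sign (∑ a, w j a * (x i a - x i' a))) • (x i - x i'))
      = (lam / 2) • ∑ i, Yt i • Dψ i := by
    refine ContinuousLinearMap.ext fun h => ?_
    set Sh : Matrix (Fin n) (Fin n) ℝ :=
      Matrix.of (fun p q => Real.sign (s p q) * ((innerSL ℝ (x p - x q)) h)) with hSh
    have hLh : ∀ i k, L i k h = -((2 * (m : ℝ))⁻¹ * ((P * Sh * P) i k)) := by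
      intro i k
      rw [hL]
      simp only [ContinuousLinearMap.neg_apply, ContinuousLinearMap.smul_apply,
        ContinuousLinearMap.sum_apply, smul_eq_mul]
      rw [htriple]
      refine congrArg Neg.neg (congrArg (fun t => (2 * (m : ℝ))⁻¹ * t)
        (Finset.sum_congr rfl fun p _ => Finset.sum_congr rfl fun q _ => ?_))
      simp only [hSh, Matrix.of_apply]
      try ring
    have hkey' : ∀ i, ((Mf (w j)).mulVec (fun k => Dψ k h)) i =
        (2 * (m : ℝ))⁻¹ * (((P * Sh * P)).mulVec z i) := by
      intro i
      have h0 := congrArg (fun (f : EuclideanSpace ℝ (Fin d) →L[ℝ] ℝ) => f h) (hkey i)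
      simp only [ContinuousLinearMap.add_apply, ContinuousLinearMap.sum_apply,
        ContinuousLinearMap.smul_apply, smul_eq_mul, ContinuousLinearMap.zero_apply] at h0
      have e3 : -∑ k, z k * (L i k h) = (2 * (m : ℝ))⁻¹ * ∑ k, (P * Sh * P) i k * z k := by
        rw [← Finset.sum_neg_distrib, Finset.mul_sum]
        refine Finset.sum_congr rfl fun k _ => ?_
        rw [hLh]
        ring
      calc ((Mf (w j)).mulVec (fun k => Dψ k h)) i
          = ∑ k, Mf (w j) i k * (Dψ k h) := rfl
        _ = -∑ k, z k * (L i k h) := by linarith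
        _ = (2 * (m : ℝ))⁻¹ * ∑ k, (P * Sh * P) i k * z k := e3
        _ = (2 * (m : ℝ))⁻¹ * (((P * Sh * P)).mulVec z i) := rfl
    have hsum : ∑ i, Yt i * (Dψ i h) = (2 * (m : ℝ))⁻¹ * (z ⬝ᵥ Sh.mulVec z) := by
      have c2 : Yt ⬝ᵥ (fun k => Dψ k h) = z ⬝ᵥ ((Mf (w j)).mulVec (fun k => Dψ k h)) := by
        rw [← hMz, dotProduct_comm, dotProduct_mulVec, hvecMulM]
        exact dotProduct_comm _ _
      have c3 : z ⬝ᵥ ((Mf (w j)).mulVec (fun k => Dψ k h)) =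
          (2 * (m : ℝ))⁻¹ * (z ⬝ᵥ ((P * Sh * P).mulVec z)) := by
        have hfun : (Mf (w j)).mulVec (fun k => Dψ k h) =
            fun i => (2 * (m : ℝ))⁻¹ * ((P * Sh * P).mulVec z i) := funext hkey'
        rw [hfun]
        simp only [dotProduct]
        rw [Finset.mul_sum]
        exact Finset.sum_congr rfl fun i _ => by ring
      have c4 : z ⬝ᵥ ((P * Sh * P).mulVec z) = z ⬝ᵥ Sh.mulVec z := by
        rw [hconj, hPz]
      calc ∑ i, Yt i * (Dψ i h) = Yt ⬝ᵥ (fun k => Dψ k h) := rfl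
        _ = z ⬝ᵥ ((Mf (w j)).mulVec (fun k => Dψ k h)) := c2
        _ = (2 * (m : ℝ))⁻¹ * (z ⬝ᵥ ((P * Sh * P).mulVec z)) := c3
        _ = (2 * (m : ℝ))⁻¹ * (z ⬝ᵥ Sh.mulVec z) := by rw [c4]
    rw [InnerProductSpace.toDual_apply_apply]
    have hRHS : ((lam / 2) • ∑ i, Yt i • Dψ i) h = (lam / 2) * ∑ i, Yt i * (Dψ i h) := by
      simp only [ContinuousLinearMap.smul_apply, ContinuousLinearMap.sum_apply, smul_eq_mul]
    rw [hRHS, hsum]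
    have hLHS : (inner ℝ ((lam / (4 * (m : ℝ))) • ∑ i, ∑ i',
        (z i * z i' * Real.sign (∑ a, w j a * (x i a - x i' a))) • (x i - x i')) h : ℝ)
        = (lam / (4 * (m : ℝ))) * ∑ p, ∑ q,
            (z p * z q * Real.sign (s p q)) * ((innerSL ℝ (x p - x q)) h) := by
      rw [real_inner_smul_left, sum_inner]
      congr 1
      refine Finset.sum_congr rfl fun p _ => ?_
      rw [sum_inner]
      refine Finset.sum_congr rfl fun q _ => ?_
      rw [real_inner_smul_left, innerSL_apply_apply, hs]
    rw [hLHS]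
    have hdot : z ⬝ᵥ Sh.mulVec z = ∑ p, ∑ q,
        (z p * z q * Real.sign (s p q)) * ((innerSL ℝ (x p - x q)) h) := by
      simp only [dotProduct, Matrix.mulVec, hSh, Matrix.of_apply]
      refine Finset.sum_congr rfl fun p _ => ?_
      rw [Finset.mul_sum]
      exact Finset.sum_congr rfl fun q _ => by ring
    rw [hdot]
    have hsc : lam / (4 * (m : ℝ)) = lam / 2 * (2 * (m : ℝ))⁻¹ := by
      ring
    rw [hsc, mul_assoc]
  rw [hfinal]
  exact hGderiv


end
end

section
/- Let n ≥ 1, M ≥ 1, T > 0, and let K_1,…,K_M ∈ ℝ^{n×n} be symmetric positive semidefinite matrices with trace(K_j) ≤ T for every j ∈ [M]. If ε ∈ ℝ^n is a standard Gaussian vector (centred with identity covariance), then E[ max_{j∈[M]} √(εᵀ K_j ε) ] ≤ √T · √(4 log M + 2). -/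
open MeasureTheory ProbabilityTheory Real

noncomputable section

namespace GMQ

open scoped ENNReal NNReal

lemma integrable_exp_quad {b : ℝ} (hb : 0 < b) (c : ℝ) :
    MeasureTheory.Integrable fun x : ℝ => Real.exp (-b*x^2 + c*x) := by
  have h : ∀ x : ℝ, Real.exp (-b*x^2 + c*x)
      = Real.exp (c^2/(4*b)) * Real.exp (-b*(x - c/(2*b))^2) := by
    intro x; rw [← Real.exp_add]; congr 1; field_simp; ring
  simp_rw [h]
  exact ((integrable_exp_neg_mul_sq hb).comp_sub_right (c/(2*b))).const_mul _

lemma integral_exp_quad {b : ℝ} (hb : 0 < b) (c : ℝ) :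
    ∫ x : ℝ, Real.exp (-b*x^2 + c*x) = Real.sqrt (π/b) * Real.exp (c^2/(4*b)) := by
  have h : ∀ x : ℝ, Real.exp (-b*x^2 + c*x)
      = Real.exp (c^2/(4*b)) * Real.exp (-b*(x - c/(2*b))^2) := by
    intro x; rw [← Real.exp_add]; congr 1; field_simp; ring
  simp_rw [h]
  rw [integral_const_mul,
    integral_sub_right_eq_self (μ := volume) (fun x : ℝ => Real.exp (-b*x^2)) (c/(2*b)),
    integral_gaussian]
  ring

lemma lintegral_gaussianReal_ofReal {f : ℝ → ℝ} (hm : Measurable f) (hnn : ∀ x, 0 ≤ f x)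
    (hi : Integrable fun x => gaussianPDFReal 0 1 x * f x) :
    ∫⁻ x, ENNReal.ofReal (f x) ∂(gaussianReal 0 1)
      = ENNReal.ofReal (∫ x, gaussianPDFReal 0 1 x * f x) := by
  rw [gaussianReal_of_var_ne_zero 0 one_ne_zero,
    lintegral_withDensity_eq_lintegral_mul _ (measurable_gaussianPDF 0 1) hm.ennreal_ofReal]
  simp_rw [Pi.mul_apply, gaussianPDF,
    ← ENNReal.ofReal_mul (gaussianPDFReal_nonneg 0 1 _)]
  exact (ofReal_integral_eq_lintegral_ofReal hi
    (ae_of_all _ fun x => mul_nonneg (gaussianPDFReal_nonneg 0 1 x) (hnn x))).symm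

lemma pdf01_mul (a c x : ℝ) :
    gaussianPDFReal 0 1 x * Real.exp (c*x^2 + a*x)
      = (Real.sqrt (2*π))⁻¹ * Real.exp (-(1/2 - c)*x^2 + a*x) := by
  rw [gaussianPDFReal]
  simp only [NNReal.coe_one, mul_one, sub_zero]
  rw [mul_assoc, ← Real.exp_add]
  congr 2
  ring


lemma lint_exp_mul (a : ℝ) :
    ∫⁻ x, ENNReal.ofReal (Real.exp (a * x)) ∂(gaussianReal 0 1)
      = ENNReal.ofReal (Real.exp (a^2/2)) := by
  have hkey : ∀ x : ℝ, gaussianPDFReal 0 1 x * Real.exp (a*x)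
      = (Real.sqrt (2*π))⁻¹ * Real.exp (-(1/2 - 0)*x^2 + a*x) := by
    intro x
    have := pdf01_mul a 0 x
    simpa using this
  have hb : (0:ℝ) < 1/2 - 0 := by norm_num
  have hint : Integrable fun x => gaussianPDFReal 0 1 x * Real.exp (a*x) := by
    simp_rw [hkey]
    exact (integrable_exp_quad hb a).const_mul _
  rw [lintegral_gaussianReal_ofReal (f := fun x => Real.exp (a*x)) (by fun_prop)
    (fun x => (Real.exp_pos _).le) hint]
  congr 1
  simp_rw [hkey]
  rw [integral_const_mul, integral_exp_quad hb a]
  have h2 : Real.sqrt (π/(1/2 - 0)) = Real.sqrt (2*π) := by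
    norm_num [mul_comm]
  rw [h2, ← mul_assoc, inv_mul_cancel₀, one_mul]
  · norm_num
  · positivity

lemma lint_exp_sq_le {c : ℝ} (h0 : 0 ≤ c) (h1 : c ≤ 1/4) :
    ∫⁻ x, ENNReal.ofReal (Real.exp (c * x^2)) ∂(gaussianReal 0 1)
      ≤ ENNReal.ofReal (Real.exp (2*c)) := by
  have hb : (0:ℝ) < 1/2 - c := by linarith
  have hkey : ∀ x : ℝ, gaussianPDFReal 0 1 x * Real.exp (c*x^2)
      = (Real.sqrt (2*π))⁻¹ * Real.exp (-(1/2 - c)*x^2 + 0*x) := by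
    intro x
    have := pdf01_mul 0 c x
    simpa using this
  have hint : Integrable fun x => gaussianPDFReal 0 1 x * Real.exp (c*x^2) := by
    simp_rw [hkey]
    exact (integrable_exp_quad hb 0).const_mul _
  rw [lintegral_gaussianReal_ofReal (f := fun x => Real.exp (c*x^2)) (by fun_prop)
    (fun x => (Real.exp_pos _).le) hint]
  apply ENNReal.ofReal_le_ofReal
  simp_rw [hkey]
  rw [integral_const_mul, integral_exp_quad hb 0]
  have hval : (Real.sqrt (2*π))⁻¹ * (Real.sqrt (π/(1/2 - c)) * Real.exp (0^2/(4*(1/2-c))))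
      = Real.sqrt (1/(1 - 2*c)) := by
    rw [show (0:ℝ)^2/(4*(1/2-c)) = 0 by norm_num, Real.exp_zero, mul_one, ← Real.sqrt_inv,
      ← Real.sqrt_mul (by positivity)]
    congr 1
    have hπ := Real.pi_ne_zero
    have h1c : (1:ℝ) - 2*c ≠ 0 := by linarith
    have h2c : (1:ℝ)/2 - c ≠ 0 := by linarith
    field_simp
  rw [hval]
  have hexp : Real.exp (2*c) = Real.sqrt (Real.exp (4*c)) := by
    rw [show (4:ℝ)*c = 2*c + 2*c by ring, Real.exp_add, Real.sqrt_mul_self (Real.exp_pos _).le]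
  rw [hexp]
  apply Real.sqrt_le_sqrt
  rw [div_le_iff₀ (by linarith)]
  have h4 := Real.add_one_le_exp (4*c)
  nlinarith [Real.exp_pos (4*c)]

lemma lintegral_pi_prod : ∀ {n : ℕ} (f : Fin n → ℝ → ℝ≥0∞), (∀ i, Measurable (f i)) →
    ∫⁻ x, ∏ i, f i (x i) ∂(stdGaussianPi n) = ∏ i, (∫⁻ s, f i s ∂(gaussianReal 0 1)) := by
  intro n
  induction n with
  | zero =>
    intro f hf
    haveI : IsProbabilityMeasure (stdGaussianPi 0) := by unfold stdGaussianPi; infer_instance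
    simp [lintegral_const]
  | succ n ih =>
    intro f hf
    have hmp := (measurePreserving_piFinSuccAbove (fun _ : Fin (n+1) => gaussianReal 0 1) 0).symm
    rw [show stdGaussianPi (n+1) = Measure.pi (fun _ : Fin (n+1) => gaussianReal 0 1) from rfl,
      ← hmp.lintegral_comp_emb (MeasurableEquiv.measurableEmbedding _)
        (fun x => ∏ i, f i (x i))]
    simp only [MeasurableEquiv.piFinSuccAbove_symm_apply, Fin.insertNthEquiv,
      Fin.prod_univ_succ, Fin.insertNth_zero, Equiv.coe_fn_mk, Fin.zero_succAbove, cast_eq,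
      Fin.cons_zero, Fin.cons_succ]
    rw [lintegral_prod_mul (f := f 0) (g := fun y : Fin n → ℝ => ∏ i : Fin n, f i.succ (y i))
      (hf 0).aemeasurable
      (Measurable.aemeasurable
        (Finset.measurable_prod _ fun i _ => (hf i.succ).comp (measurable_pi_apply i)))]
    exact congrArg _ (ih (fun i => f i.succ) fun i => hf i.succ)


lemma lint_exp_dot {n : ℕ} (v : Fin n → ℝ) :
    ∫⁻ ε, ENNReal.ofReal (Real.exp (∑ i, v i * ε i)) ∂(stdGaussianPi n)
      = ENNReal.ofReal (Real.exp ((∑ i, (v i)^2)/2)) := by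
  have h1 : ∀ ε : Fin n → ℝ, ENNReal.ofReal (Real.exp (∑ i, v i * ε i))
      = ∏ i, ENNReal.ofReal (Real.exp (v i * ε i)) := by
    intro ε
    rw [Real.exp_sum, ENNReal.ofReal_prod_of_nonneg (fun i _ => (Real.exp_pos _).le)]
  simp_rw [h1]
  rw [lintegral_pi_prod (fun i s => ENNReal.ofReal (Real.exp (v i * s)))
    (fun i => by fun_prop)]
  simp_rw [lint_exp_mul]
  rw [Finset.sum_div, Real.exp_sum,
    ENNReal.ofReal_prod_of_nonneg (fun i _ => (Real.exp_pos _).le)]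

open Matrix in
lemma mgf_quadform_le {n : ℕ} {K : Matrix (Fin n) (Fin n) ℝ} (hK : K.PosSemidef)
    {T : ℝ} (hT : 0 < T) (htr : K.trace ≤ T) :
    ∫⁻ ε, ENNReal.ofReal (Real.exp ((4*T)⁻¹ * (ε ⬝ᵥ K.mulVec ε))) ∂(stdGaussianPi n)
      ≤ ENNReal.ofReal (Real.exp (1/2)) := by
  classical
  haveI : IsProbabilityMeasure (stdGaussianPi n) := by unfold stdGaussianPi; infer_instance
  set t := (4*T)⁻¹ with ht_def
  have htpos : 0 < t := by positivity
  have hH := hK.1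
  set lam := hH.eigenvalues with hlam
  set V : Matrix (Fin n) (Fin n) ℝ := (hH.eigenvectorUnitary : Matrix (Fin n) (Fin n) ℝ) with hV
  have hstar : star V = Vᵀ := by
    rw [Matrix.star_eq_conjTranspose, Matrix.conjTranspose_eq_transpose_of_trivial]
  have hVtV : Vᵀ * V = 1 := by
    rw [← hstar]
    simp [hV]
  have hspec : K = V * Matrix.diagonal lam * Vᵀ := by
    have h := hH.spectral_theorem
    simp only [Unitary.conjStarAlgAut_apply, Unitary.coe_star] at h
    rw [← hV, hstar] at h
    simpa [RCLike.ofReal_real_eq_id] using h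
  have htrace : K.trace = ∑ i, lam i := by
    conv_lhs => rw [hspec]
    rw [Matrix.trace_mul_cycle, hVtV, Matrix.one_mul, Matrix.trace_diagonal]
  have hlam_nonneg : ∀ i, 0 ≤ lam i := fun i => hK.eigenvalues_nonneg i
  have hlam_le : ∀ i, lam i ≤ T := fun i =>
    le_trans (le_trans (Finset.single_le_sum (fun j _ => hlam_nonneg j) (Finset.mem_univ i))
      htrace.symm.le) htr
  have htlam0 : ∀ i, 0 ≤ t * lam i := fun i => mul_nonneg htpos.le (hlam_nonneg i)
  have htlam : ∀ i, t * lam i ≤ 1/4 := by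
    intro i
    rw [ht_def, inv_mul_le_iff₀ (by positivity)]
    linarith [hlam_le i]
  have h2tl : ∀ i, (0:ℝ) ≤ 2 * (t * lam i) := fun i => by linarith [htlam0 i]
  -- quadratic form identity
  have hQ : ∀ ε : Fin n → ℝ, t * (ε ⬝ᵥ K.mulVec ε)
      = ∑ i, (t * lam i) * ((Vᵀ *ᵥ ε) i)^2 := by
    intro ε
    have h1 : K.mulVec ε = V *ᵥ (Matrix.diagonal lam *ᵥ (Vᵀ *ᵥ ε)) := by
      conv_lhs => rw [hspec]
      rw [← Matrix.mulVec_mulVec, ← Matrix.mulVec_mulVec]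
    rw [h1, Matrix.dotProduct_mulVec, ← Matrix.mulVec_transpose]
    simp only [dotProduct, Matrix.mulVec_diagonal]
    rw [Finset.mul_sum]
    exact Finset.sum_congr rfl fun i _ => by ring
  -- norm preservation
  have hnormpres : ∀ c : Fin n → ℝ, ∑ a, ((V *ᵥ c) a)^2 = ∑ i, (c i)^2 := by
    intro c
    have h1 : ∑ a, ((V *ᵥ c) a)^2 = (V *ᵥ c) ⬝ᵥ (V *ᵥ c) := by
      simp [dotProduct, sq]
    rw [h1, Matrix.dotProduct_mulVec, ← Matrix.mulVec_transpose, Matrix.mulVec_mulVec, hVtV,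
      Matrix.one_mulVec]
    simp [dotProduct, sq]
  -- linearization
  have hlin : ∀ ε : Fin n → ℝ, ENNReal.ofReal (Real.exp (t * (ε ⬝ᵥ K.mulVec ε)))
      = ∫⁻ g, ENNReal.ofReal
          (Real.exp (∑ i, Real.sqrt (2*(t*lam i)) * (Vᵀ *ᵥ ε) i * g i)) ∂(stdGaussianPi n) := by
    intro ε
    rw [lint_exp_dot (fun i => Real.sqrt (2*(t*lam i)) * (Vᵀ *ᵥ ε) i)]
    rw [hQ ε]
    congr 2
    rw [Finset.sum_div]
    refine Finset.sum_congr rfl fun i _ => ?_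
    rw [mul_pow, Real.sq_sqrt (h2tl i)]
    ring
  simp_rw [hlin]
  -- swap
  have hFm : Measurable (fun p : (Fin n → ℝ) × (Fin n → ℝ) =>
      ENNReal.ofReal (Real.exp (∑ i, Real.sqrt (2*(t*lam i)) * (Vᵀ *ᵥ p.1) i * p.2 i))) := by
    apply Measurable.ennreal_ofReal
    apply Real.measurable_exp.comp
    apply Finset.measurable_sum
    intro i _
    simp only [Matrix.mulVec, dotProduct]
    exact ((measurable_const.mul
      (Finset.measurable_sum _ fun b _ =>
        measurable_const.mul ((measurable_pi_apply b).comp measurable_fst))).mul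
      ((measurable_pi_apply i).comp measurable_snd))
  rw [lintegral_lintegral_swap hFm.aemeasurable]
  -- inner integral
  have hrot : ∀ g ε : Fin n → ℝ, ∑ i, Real.sqrt (2*(t*lam i)) * (Vᵀ *ᵥ ε) i * g i
      = ∑ a, (V *ᵥ (fun i => Real.sqrt (2*(t*lam i)) * g i)) a * ε a := by
    intro g ε
    have h1 : ∑ i, Real.sqrt (2*(t*lam i)) * (Vᵀ *ᵥ ε) i * g i
        = (fun i => Real.sqrt (2*(t*lam i)) * g i) ⬝ᵥ (Vᵀ *ᵥ ε) := by
      simp only [dotProduct]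
      exact Finset.sum_congr rfl fun i _ => by ring
    rw [h1, Matrix.dotProduct_mulVec, Matrix.vecMul_transpose]
    simp [dotProduct]
  have hinner : ∀ g : Fin n → ℝ,
      (∫⁻ ε, ENNReal.ofReal
        (Real.exp (∑ i, Real.sqrt (2*(t*lam i)) * (Vᵀ *ᵥ ε) i * g i)) ∂(stdGaussianPi n))
      = ENNReal.ofReal (Real.exp (∑ i, (t * lam i) * (g i)^2)) := by
    intro g
    simp_rw [hrot g]
    rw [lint_exp_dot]
    congr 2
    rw [hnormpres, Finset.sum_div]
    refine Finset.sum_congr rfl fun i _ => ?_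
    rw [mul_pow, Real.sq_sqrt (h2tl i)]
    ring
  simp_rw [hinner]
  -- factorize and bound
  have hprod : ∀ g : Fin n → ℝ, ENNReal.ofReal (Real.exp (∑ i, (t * lam i) * (g i)^2))
      = ∏ i, ENNReal.ofReal (Real.exp ((t * lam i) * (g i)^2)) := by
    intro g
    rw [Real.exp_sum, ENNReal.ofReal_prod_of_nonneg (fun i _ => (Real.exp_pos _).le)]
  simp_rw [hprod]
  rw [lintegral_pi_prod (fun i s => ENNReal.ofReal (Real.exp ((t * lam i) * s^2)))
    (fun i => by fun_prop)]
  calc ∏ i, (∫⁻ s, ENNReal.ofReal (Real.exp ((t * lam i) * s^2)) ∂(gaussianReal 0 1))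
      ≤ ∏ i, ENNReal.ofReal (Real.exp (2*(t * lam i))) :=
        Finset.prod_le_prod' fun i _ => lint_exp_sq_le (htlam0 i) (htlam i)
    _ = ENNReal.ofReal (Real.exp (∑ i, 2*(t*lam i))) := by
        rw [Real.exp_sum, ENNReal.ofReal_prod_of_nonneg (fun i _ => (Real.exp_pos _).le)]
    _ ≤ ENNReal.ofReal (Real.exp (1/2)) := by
        apply ENNReal.ofReal_le_ofReal
        apply Real.exp_le_exp.2
        have hs : ∑ i, 2*(t*lam i) = 2*t*K.trace := by
          rw [htrace, Finset.mul_sum]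
          exact Finset.sum_congr rfl fun i _ => by ring
        rw [hs, ht_def]
        rw [show 2*(4*T)⁻¹*K.trace = K.trace/(2*T) by field_simp; ring]
        rw [div_le_iff₀ (by positivity)]
        linarith

end GMQ

set_option maxHeartbeats 1000000 in
open Matrix in
/-- Finite-maximum bound for Gaussian quadratic forms: if `ε` is a standard Gaussian
vector and the `K_j` are symmetric positive semidefinite with trace at most `T`, then
`E[max_j √(εᵀ K_j ε)] ≤ √T √(4 log M + 2)`. -/
theorem gaussian_max_quadform (n M : ℕ) (hn : 1 ≤ n) (hM : 1 ≤ M) (T : ℝ) (hT : 0 < T)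
    (K : Fin M → Matrix (Fin n) (Fin n) ℝ) (hK : ∀ j, (K j).PosSemidef)
    (htr : ∀ j, (K j).trace ≤ T) :
    (∫ ε : Fin n → ℝ, (⨆ j, Real.sqrt (ε ⬝ᵥ (K j).mulVec ε)) ∂(stdGaussianPi n)) ≤
      Real.sqrt T * Real.sqrt (4 * Real.log M + 2) := by
  classical
  haveI : IsProbabilityMeasure (stdGaussianPi n) := by unfold stdGaussianPi; infer_instance
  haveI : Nonempty (Fin M) := ⟨⟨0, hM⟩⟩
  set μ := stdGaussianPi n with hμ
  set t := (4*T)⁻¹ with ht_def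
  have htpos : 0 < t := by positivity
  set Q := fun (j : Fin M) (ε : Fin n → ℝ) => ε ⬝ᵥ (K j).mulVec ε with hQdef
  have hQmeas : ∀ j, Measurable (Q j) := by
    intro j
    simp only [hQdef, dotProduct, Matrix.mulVec]
    exact Finset.measurable_sum _ fun i _ => (measurable_pi_apply i).mul
      (Finset.measurable_sum _ fun b _ => measurable_const.mul (measurable_pi_apply b))
  have hQnn : ∀ j ε, 0 ≤ Q j ε := by
    intro j ε
    simpa using (hK j).dotProduct_mulVec_nonneg ε
  have hbdd : ∀ (g : Fin M → ℝ), BddAbove (Set.range g) :=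
    fun g => Set.Finite.bddAbove (Set.finite_range _)
  -- MGF bounds
  have hXm : ∀ j, Measurable fun ε => Real.exp (t * Q j ε) :=
    fun j => (measurable_const.mul (hQmeas j)).exp
  have hXlint : ∀ j, ∫⁻ ε, ENNReal.ofReal (Real.exp (t * Q j ε)) ∂μ
      ≤ ENNReal.ofReal (Real.exp (1/2)) := fun j => GMQ.mgf_quadform_le (hK j) hT (htr j)
  have hXint : ∀ j, Integrable (fun ε => Real.exp (t * Q j ε)) μ := by
    intro j
    refine ⟨(hXm j).aestronglyMeasurable, ?_⟩
    rw [hasFiniteIntegral_iff_ofReal (ae_of_all _ fun ε => (Real.exp_pos _).le)]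
    exact lt_of_le_of_lt (hXlint j) ENNReal.ofReal_lt_top
  have hXival : ∀ j, ∫ ε, Real.exp (t * Q j ε) ∂μ ≤ Real.exp (1/2) := by
    intro j
    rw [integral_eq_lintegral_of_nonneg_ae (ae_of_all _ fun ε => (Real.exp_pos _).le)
      (hXm j).aestronglyMeasurable]
    calc (∫⁻ ε, ENNReal.ofReal (Real.exp (t * Q j ε)) ∂μ).toReal
        ≤ (ENNReal.ofReal (Real.exp (1/2))).toReal :=
          ENNReal.toReal_mono ENNReal.ofReal_ne_top (hXlint j)
      _ = Real.exp (1/2) := ENNReal.toReal_ofReal (Real.exp_pos _).le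
  set S := fun ε => ∑ j, Real.exp (t * Q j ε) with hSdef
  have hSint : Integrable S μ := integrable_finset_sum _ fun j _ => hXint j
  set c := ∫ ε, S ε ∂μ with hc
  have hM1 : (1:ℝ) ≤ (M:ℝ) := by exact_mod_cast hM
  have hSge : ∀ ε, (M:ℝ) ≤ S ε := by
    intro ε
    calc (M:ℝ) = ∑ _j : Fin M, (1:ℝ) := by simp
      _ ≤ S ε := Finset.sum_le_sum fun j _ =>
          Real.one_le_exp (mul_nonneg htpos.le (hQnn j ε))
  have hcM : (M:ℝ) ≤ c := by
    calc (M:ℝ) = ∫ _ε, (M:ℝ) ∂μ := by simp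
      _ ≤ c := integral_mono (integrable_const _) hSint hSge
  have hcpos : 0 < c := lt_of_lt_of_le (by linarith) hcM
  have hcle : c ≤ M * Real.exp (1/2) := by
    rw [hc, hSdef, integral_finset_sum _ (fun j _ => hXint j)]
    calc ∑ j, ∫ ε, Real.exp (t * Q j ε) ∂μ
        ≤ ∑ _j : Fin M, Real.exp (1/2) := Finset.sum_le_sum fun j _ => hXival j
      _ = M * Real.exp (1/2) := by
          rw [Finset.sum_const, Finset.card_univ, Fintype.card_fin, nsmul_eq_mul]
  have hlogc : Real.log c ≤ Real.log M + 1/2 := by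
    calc Real.log c ≤ Real.log (M * Real.exp (1/2)) := Real.log_le_log hcpos hcle
      _ = Real.log M + 1/2 := by
          rw [Real.log_mul (by positivity) (Real.exp_ne_zero _), Real.log_exp]
  set G := fun ε => (4*T) * (S ε / c - 1 + Real.log c) with hGdef
  have hGint : Integrable G μ :=
    (((hSint.div_const c).sub (integrable_const 1)).add (integrable_const (Real.log c))).const_mul _
  have hint1 : Integrable (fun a => S a / c - 1) μ := by
    exact (hSint.div_const c).sub (integrable_const 1)
  have hint2 : Integrable (fun a => S a / c) μ := hSint.div_const c
  have hGval : ∫ ε, G ε ∂μ = (4*T) * Real.log c := by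
    rw [hGdef]
    rw [integral_const_mul]
    rw [integral_add hint1 (integrable_const _),
      integral_sub hint2 (integrable_const 1), integral_div, integral_const,
      integral_const]
    simp [← hc, div_self hcpos.ne']
  have hsupQ_le : ∀ ε, (⨆ j, Q j ε) ≤ G ε := by
    intro ε
    obtain ⟨j0, hj0⟩ := Finite.exists_max fun j => Q j ε
    refine le_trans (ciSup_le hj0) ?_
    have h0 : Real.exp (t * Q j0 ε) ≤ S ε := by
      simp only [hSdef]
      exact Finset.single_le_sum (f := fun j => Real.exp (t * Q j ε))
        (fun j _ => (Real.exp_pos _).le) (Finset.mem_univ j0)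
    have h1 : t * Q j0 ε ≤ Real.log (S ε) := by
      have h1' := Real.log_le_log (Real.exp_pos (t * Q j0 ε)) h0
      rwa [Real.log_exp] at h1'
    have hSpos : 0 < S ε := lt_of_lt_of_le (by linarith) (hSge ε)
    have h2 : Real.log (S ε) ≤ S ε / c - 1 + Real.log c := by
      have h3 : Real.log (S ε / c) ≤ S ε / c - 1 :=
        Real.log_le_sub_one_of_pos (div_pos hSpos hcpos)
      rw [Real.log_div hSpos.ne' hcpos.ne'] at h3
      linarith
    have h4 : Q j0 ε = (4*T) * (t * Q j0 ε) := by
      rw [ht_def]; field_simp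
    rw [h4, hGdef]
    exact mul_le_mul_of_nonneg_left (le_trans h1 h2) (by positivity)
  have hsupQ_nn : ∀ ε, 0 ≤ ⨆ j, Q j ε := fun ε =>
    le_ciSup_of_le (hbdd _) ⟨0, hM⟩ (hQnn _ ε)
  have hsupQm : Measurable fun ε => ⨆ j, Q j ε := Measurable.iSup fun j => hQmeas j
  have hsupQint : Integrable (fun ε => ⨆ j, Q j ε) μ := by
    refine hGint.mono' hsupQm.aestronglyMeasurable (ae_of_all _ fun ε => ?_)
    rw [Real.norm_eq_abs, abs_of_nonneg (hsupQ_nn ε)]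
    exact hsupQ_le ε
  have hsupQint_le : ∫ ε, (⨆ j, Q j ε) ∂μ ≤ T * (4 * Real.log M + 2) := by
    calc ∫ ε, (⨆ j, Q j ε) ∂μ ≤ ∫ ε, G ε ∂μ :=
          integral_mono hsupQint hGint hsupQ_le
      _ = (4*T) * Real.log c := hGval
      _ ≤ (4*T) * (Real.log M + 1/2) :=
          mul_le_mul_of_nonneg_left hlogc (by positivity)
      _ = T * (4 * Real.log M + 2) := by ring
  set F := fun ε => ⨆ j, Real.sqrt (Q j ε) with hF
  have hFm : Measurable F := Measurable.iSup fun j => (hQmeas j).sqrt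
  have hFsq : ∀ ε, F ε ^ 2 = ⨆ j, Q j ε := by
    intro ε
    obtain ⟨j0, hj0⟩ := Finite.exists_max fun j => Q j ε
    have h1 : F ε = Real.sqrt (Q j0 ε) := by
      simp only [hF]
      exact le_antisymm (ciSup_le fun j => Real.sqrt_le_sqrt (hj0 j))
        (le_ciSup (f := fun j => Real.sqrt (Q j ε)) (hbdd _) j0)
    have h2 : (⨆ j, Q j ε) = Q j0 ε := le_antisymm (ciSup_le hj0)
      (le_ciSup (f := fun j => Q j ε) (hbdd _) j0)
    rw [h1, h2, Real.sq_sqrt (hQnn j0 ε)]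
  have hFint2 : Integrable (fun ε => F ε ^ 2) μ :=
    hsupQint.congr (ae_of_all _ fun ε => (hFsq ε).symm)
  have hFL2 : MemLp F 2 μ := (memLp_two_iff_integrable_sq hFm.aestronglyMeasurable).2 hFint2
  have hvd := variance_eq_sub hFL2
  have hvnn := variance_nonneg F μ
  have h5 : (∫ ε, F ε ∂μ)^2 ≤ ∫ ε, F ε ^ 2 ∂μ := by
    rw [hvd] at hvnn
    have : μ[F ^ 2] = ∫ ε, F ε ^ 2 ∂μ := by
      simp only [Pi.pow_apply]
    rw [this] at hvnn
    linarith
  have hkey : (∫ ε, F ε ∂μ)^2 ≤ T * (4 * Real.log M + 2) := by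
    refine le_trans h5 (le_trans ?_ hsupQint_le)
    rw [integral_congr_ae (ae_of_all _ hFsq)]
  have hFnn : 0 ≤ ∫ ε, F ε ∂μ := integral_nonneg fun ε =>
    le_ciSup_of_le (hbdd _) ⟨0, hM⟩ (Real.sqrt_nonneg _)
  calc ∫ ε, F ε ∂μ = Real.sqrt ((∫ ε, F ε ∂μ)^2) := (Real.sqrt_sq hFnn).symm
    _ ≤ Real.sqrt (T * (4 * Real.log M + 2)) := Real.sqrt_le_sqrt hkey
    _ = Real.sqrt T * Real.sqrt (4 * Real.log M + 2) := Real.sqrt_mul hT.le _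

end
end
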